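/- arXiv:1112.5709 — 4 statements merged into one kernel-verified Lean document; each statement's English description precedes it below -/
import Mathlib

section
/- Let π : Ã* → G and π' : Ã'* → G be m-epis, for finite alphabets A and A'. If there exists a Stallings section for π, then there exists a Stallings section for π'. -/
/-!  Common framework: words over an involutive alphabet Ã = A ∪ A⁻¹ (modelled as
`α × Bool`), free reduction, matched epimorphisms, Stallings sections and
Ã-automata, following Silva–Soler-Escrivà–Ventura. -/

/-- A word over the involutive alphabet Ã = A ∪ A⁻¹: the letter `(a, tt)` denotes
`a` and `(a, ff)` denotes `a⁻¹` (the `FreeGroup` convention). -/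
abbrev Word (α : Type) : Type := List (α × Bool)

namespace Stallings

instance {β : Type} : HasSubset (Language β) := ⟨fun L M => ∀ w ∈ L, w ∈ M⟩
instance {β : Type} : Union (Language β) := ⟨fun L M => {w | w ∈ L ∨ w ∈ M}⟩
instance {β : Type} : Inter (Language β) := ⟨fun L M => {w | w ∈ L ∧ w ∈ M}⟩
instance {β : Type} : EmptyCollection (Language β) := ⟨(∅ : Set (List β))⟩

variable {α : Type} {G : Type} [Group G]

/-- The formal inverse of a letter of Ã. -/
def letterInv (x : α × Bool) : α × Bool := (x.1, !x.2)

/-- The formal inverse `w⁻¹` of a word over Ã. -/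
def wordInv (w : Word α) : Word α := (w.map letterInv).reverse

/-- The free reduction `w̄` of a word over Ã (iterated deletion of factors `a a⁻¹`). -/
noncomputable def redW (w : Word α) : Word α :=
  letI := Classical.decEq α
  FreeGroup.reduce w

/-- The reduction `L̄` of a language over Ã. -/
noncomputable def red (L : Language (α × Bool)) : Language (α × Bool) :=
  redW '' L

/-- The set `R_A` of reduced words over Ã. -/
noncomputable def Reduced : Language (α × Bool) := {w | redW w = w}

/-- Evaluation of a monoid homomorphism `π : Ã* → G` at a word. -/
def ev (π : FreeMonoid (α × Bool) →* G) (w : Word α) : G :=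
  π (FreeMonoid.ofList w)

/-- The image of a language under (evaluation of) `π`. -/
def evImg (π : FreeMonoid (α × Bool) →* G) (L : Language (α × Bool)) : Set G :=
  {g | ∃ w ∈ L, ev π w = g}

/-- A matched epimorphism (m-epi) `π : Ã* → G`: a surjective monoid homomorphism
sending formal inverses to inverses. -/
structure IsMEpi (π : FreeMonoid (α × Bool) →* G) : Prop where
  surjective : Function.Surjective π
  matched : ∀ (a : α) (b : Bool),
    π (FreeMonoid.of (a, !b)) = (π (FreeMonoid.of (a, b)))⁻¹

/-- `S_X = Xπ⁻¹ ∩ S`, for `X ⊆ G`. -/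
def sub (S : Language (α × Bool)) (π : FreeMonoid (α × Bool) →* G) (X : Set G) :
    Language (α × Bool) :=
  {w ∈ S | ev π w ∈ X}

/-- A Stallings section for an m-epi `π : Ã* → G`: a regular section `S ⊆ R_A`
such that each `S_g` is regular (S1), and `S_{gh} ⊆ (S_g S_h)‾` (S2). -/
structure IsStallingsSection (π : FreeMonoid (α × Bool) →* G)
    (S : Language (α × Bool)) : Prop where
  regular : S.IsRegular
  reduced : S ⊆ Reduced
  inv_mem : ∀ w ∈ S, wordInv w ∈ S
  exists_rep : ∀ g : G, ∃ w ∈ S, ev π w = g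
  s1 : ∀ g : G, (sub S π {g}).IsRegular
  s2 : ∀ g h : G, sub S π {g * h} ⊆ red (sub S π {g} * sub S π {h})

/-- A group has a Stallings section if some m-epi onto it (from the free monoid on
an involutive finite alphabet) admits a Stallings section. -/
def HasStallingsSection (G : Type) [Group G] : Prop :=
  ∃ (α : Type) (π : FreeMonoid (α × Bool) →* G) (S : Language (α × Bool)),
    Finite α ∧ IsMEpi π ∧ IsStallingsSection π S

/-- `Pref L`: the set of prefixes of words of `L`. -/
def Pref (L : Language (α × Bool)) : Language (α × Bool) :=
  {u | ∃ v, u ++ v ∈ L}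

/-- An extendable Stallings section: every `u ∈ S` admits a reduced word `v` with
`u vⁿ ∈ S` for all `n` and `u ∈ Pref (S_{(u vⁿ u⁻¹)π})` for almost all `n`. -/
def Extendable (π : FreeMonoid (α × Bool) →* G) (S : Language (α × Bool)) : Prop :=
  ∀ u ∈ S, ∃ v : Word α, v ∈ Reduced ∧
    (∀ n : ℕ, u ++ (List.replicate n v).flatten ∈ S) ∧
    ∃ N : ℕ, ∀ n ≥ N, u ∈ Pref (sub S π {ev π u * (ev π v) ^ n * (ev π u)⁻¹})

/-- An Ã-automaton with state type `Q`, initial state `start`, terminal states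
`accept` and edge set `edges`. -/
structure Automaton (β : Type) (Q : Type) where
  start : Q
  accept : Set Q
  edges : Set (Q × β × Q)

namespace Automaton

variable {β Q : Type}

/-- `M.Path p w q`: there is a path from `p` to `q` labelled `w`. -/
inductive Path (M : Automaton β Q) : Q → List β → Q → Prop
  | nil (q : Q) : Path M q [] q
  | cons {p q r : Q} {a : β} {w : List β} :
      (p, a, q) ∈ M.edges → Path M q w r → Path M p (a :: w) r

/-- The language recognized by an automaton. -/
def lang (M : Automaton β Q) : Language β :=
  {w | ∃ t ∈ M.accept, M.Path M.start w t}

/-- A trim automaton: every state lies on some successful path. -/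
def Trim (M : Automaton β Q) : Prop :=
  ∀ q : Q, ∃ (u v : List β) (t : Q), t ∈ M.accept ∧ M.Path M.start u q ∧ M.Path q v t

/-- An involutive Ã-automaton. -/
def Involutive {α : Type} (M : Automaton (α × Bool) Q) : Prop :=
  ∀ p a q, (p, a, q) ∈ M.edges → (q, letterInv a, p) ∈ M.edges

/-- A deterministic automaton. -/
def Deterministic (M : Automaton β Q) : Prop :=
  ∀ p a q q', (p, a, q) ∈ M.edges → (p, a, q') ∈ M.edges → q = q'

/-- An inverse automaton: involutive, deterministic, trim, with a single
terminal state. -/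
def IsInverse {α : Type} (M : Automaton (α × Bool) Q) : Prop :=
  M.Involutive ∧ M.Deterministic ∧ M.Trim ∧ ∃ t : Q, M.accept = {t}

/-- The automaton obtained by identifying the states `p` and `q` (the quotient is
realized on the same state type, redirecting `q` to `p`). -/
def merge [DecidableEq Q] (M : Automaton β Q) (p q : Q) : Automaton β Q :=
  let f : Q → Q := fun x => if x = q then p else x
  { start := f M.start
    accept := f '' M.accept
    edges := {e | ∃ e' ∈ M.edges, e = (f e'.1, e'.2.1, f e'.2.2)} }

end Automaton

end Stallings

/-! ### Auxiliary infrastructure -/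

namespace Stallings

namespace Automaton

variable {β Q Q' : Type}

theorem Path.append {M : Automaton β Q} {p q r : Q} {u v : List β}
    (h1 : M.Path p u q) (h2 : M.Path q v r) : M.Path p (u ++ v) r := by
  induction h1 with
  | nil => exact h2
  | cons e _ ih => exact .cons e (ih h2)

theorem path_nil_iff {M : Automaton β Q} {p q : Q} : M.Path p [] q ↔ p = q := by
  constructor
  · intro h; cases h; rfl
  · rintro rfl; exact .nil p

theorem path_cons_iff {M : Automaton β Q} {p q : Q} {a : β} {w : List β} :
    M.Path p (a :: w) q ↔ ∃ r, (p, a, r) ∈ M.edges ∧ M.Path r w q := by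
  constructor
  · intro h; cases h with
    | cons e h' => exact ⟨_, e, h'⟩
  · rintro ⟨r, e, h⟩; exact .cons e h

theorem Path.split {M : Automaton β Q} {p r : Q} :
    ∀ {u v : List β}, M.Path p (u ++ v) r → ∃ q, M.Path p u q ∧ M.Path q v r := by
  intro u
  induction u generalizing p with
  | nil => intro v h; exact ⟨p, .nil p, h⟩
  | cons a u ih =>
    intro v h
    rw [List.cons_append] at h
    rcases path_cons_iff.1 h with ⟨s, e, h'⟩
    rcases ih h' with ⟨q, h1, h2⟩
    exact ⟨q, .cons e h1, h2⟩

/-- The Mathlib `NFA` corresponding to an `Automaton`. -/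
def toNFA (M : Automaton β Q) : NFA β Q :=
  ⟨fun q a => {q' | (q, a, q') ∈ M.edges}, {M.start}, M.accept⟩

theorem mem_evalFrom (M : Automaton β Q) :
    ∀ (w : List β) (S : Set Q) (q : Q),
      q ∈ M.toNFA.evalFrom S w ↔ ∃ p ∈ S, M.Path p w q := by
  intro w
  induction w with
  | nil =>
    intro S q
    simp only [NFA.evalFrom_nil]
    constructor
    · intro h; exact ⟨q, h, .nil q⟩
    · rintro ⟨p, hp, hpath⟩; rwa [(path_nil_iff.1 hpath)] at hp
  | cons a w ih =>
    intro S q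
    show q ∈ M.toNFA.evalFrom (M.toNFA.stepSet S a) w ↔ _
    rw [ih]
    constructor
    · rintro ⟨p', hp', hpath⟩
      rcases M.toNFA.mem_stepSet.1 hp' with ⟨p, hp, he⟩
      exact ⟨p, hp, .cons he hpath⟩
    · rintro ⟨p, hp, hpath⟩
      rcases path_cons_iff.1 hpath with ⟨r, e, h'⟩
      exact ⟨r, M.toNFA.mem_stepSet.2 ⟨p, hp, e⟩, h'⟩

/-- The language of a finite-state automaton is regular. -/
theorem lang_isRegular [Finite Q] (M : Automaton β Q) : M.lang.IsRegular := by
  have : Fintype Q := Fintype.ofFinite Q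
  refine ⟨Set Q, inferInstance, M.toNFA.toDFA, ?_⟩
  rw [NFA.toDFA_correct]
  ext w
  rw [NFA.mem_accepts]
  constructor
  · rintro ⟨t, ht, hev⟩
    rcases (mem_evalFrom M w _ t).1 hev with ⟨p, hp, hpath⟩
    rcases hp with rfl
    exact ⟨t, ht, hpath⟩
  · rintro ⟨t, ht, hpath⟩
    exact ⟨t, ht, (mem_evalFrom M w _ t).2 ⟨M.start, rfl, hpath⟩⟩

/-- The `Automaton` corresponding to a Mathlib `DFA`. -/
def ofDFA (M : DFA β Q) : Automaton β Q :=
  ⟨M.start, M.accept, {e | M.step e.1 e.2.1 = e.2.2}⟩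

theorem ofDFA_path (M : DFA β Q) :
    ∀ (w : List β) (p q : Q), (ofDFA M).Path p w q ↔ M.evalFrom p w = q := by
  intro w
  induction w with
  | nil =>
    intro p q
    rw [path_nil_iff]; exact Iff.rfl
  | cons a w ih =>
    intro p q
    rw [path_cons_iff]
    show _ ↔ M.evalFrom (M.step p a) w = q
    rw [← ih]
    constructor
    · rintro ⟨r, e, h⟩
      have : M.step p a = r := e
      rwa [this]
    · intro h
      exact ⟨M.step p a, rfl, h⟩

theorem ofDFA_lang (M : DFA β Q) : (ofDFA M).lang = M.accepts := by
  ext w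
  constructor
  · rintro ⟨t, ht, hpath⟩
    have h' := (ofDFA_path M w _ t).1 hpath
    show M.evalFrom M.start w ∈ M.accept
    exact h' ▸ ht
  · intro hw
    exact ⟨M.evalFrom M.start w, hw, (ofDFA_path M w _ _).2 rfl⟩

/-- Every regular language is the language of some finite automaton. -/
theorem exists_automaton_of_isRegular {L : Language β} (h : L.IsRegular) :
    ∃ (Q : Type) (_ : Finite Q) (M : Automaton β Q), M.lang = L := by
  rcases h with ⟨Q, fQ, M, hM⟩
  exact ⟨Q, fQ.finite, ofDFA M, (ofDFA_lang M).trans hM⟩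

/-- Product automaton, for intersections. -/
def prod (M : Automaton β Q) (M' : Automaton β Q') : Automaton β (Q × Q') where
  start := (M.start, M'.start)
  accept := {s | s.1 ∈ M.accept ∧ s.2 ∈ M'.accept}
  edges := {e | (e.1.1, e.2.1, e.2.2.1) ∈ M.edges ∧ (e.1.2, e.2.1, e.2.2.2) ∈ M'.edges}

theorem prod_path (M : Automaton β Q) (M' : Automaton β Q') :
    ∀ (w : List β) (p q : Q × Q'),
      (prod M M').Path p w q ↔ M.Path p.1 w q.1 ∧ M'.Path p.2 w q.2 := by
  intro w
  induction w with
  | nil =>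
    intro p q
    simp only [path_nil_iff]
    constructor
    · rintro rfl; exact ⟨rfl, rfl⟩
    · rintro ⟨h1, h2⟩; exact Prod.ext h1 h2
  | cons a w ih =>
    intro p q
    simp only [path_cons_iff, ih]
    constructor
    · rintro ⟨r, ⟨e1, e2⟩, h1, h2⟩
      exact ⟨⟨r.1, e1, h1⟩, ⟨r.2, e2, h2⟩⟩
    · rintro ⟨⟨r1, e1, h1⟩, ⟨r2, e2, h2⟩⟩
      exact ⟨(r1, r2), ⟨e1, e2⟩, h1, h2⟩

theorem mem_prod_lang (M : Automaton β Q) (M' : Automaton β Q') (w : List β) :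
    w ∈ (prod M M').lang ↔ w ∈ M.lang ∧ w ∈ M'.lang := by
  constructor
  · rintro ⟨t, ⟨ht1, ht2⟩, hpath⟩
    rcases (prod_path M M' w _ t).1 hpath with ⟨h1, h2⟩
    exact ⟨⟨t.1, ht1, h1⟩, ⟨t.2, ht2, h2⟩⟩
  · rintro ⟨⟨t1, ht1, h1⟩, ⟨t2, ht2, h2⟩⟩
    exact ⟨(t1, t2), ⟨ht1, ht2⟩, (prod_path M M' w _ _).2 ⟨h1, h2⟩⟩

end Automaton

section RedToolkit

variable {α : Type}

theorem redW_eq_reduce (w : Word α) :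
    redW w = (letI := Classical.decEq α; FreeGroup.reduce w) := rfl

theorem wordInv_eq_invRev (w : Word α) : wordInv w = FreeGroup.invRev w := rfl

theorem wordInv_wordInv (w : Word α) : wordInv (wordInv w) = w :=
  FreeGroup.invRev_invRev

theorem redW_eq_iff_mk (w₁ w₂ : Word α) :
    redW w₁ = redW w₂ ↔ (letI := Classical.decEq α; FreeGroup.mk w₁ = FreeGroup.mk w₂) := by
  letI := Classical.decEq α
  exact ⟨FreeGroup.reduce.exact, FreeGroup.reduce.sound⟩

theorem mk_redW (w : Word α) :
    (letI := Classical.decEq α; FreeGroup.mk (redW w)) = FreeGroup.mk w := by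
  letI := Classical.decEq α
  exact FreeGroup.reduce.self

theorem redW_redW (w : Word α) : redW (redW w) = redW w := by
  letI := Classical.decEq α
  exact FreeGroup.reduce.idem

theorem redW_wordInv (w : Word α) : redW (wordInv w) = wordInv (redW w) := by
  letI := Classical.decEq α
  rw [wordInv_eq_invRev, wordInv_eq_invRev]
  exact FreeGroup.reduce_invRev

theorem redW_nil : redW ([] : Word α) = [] := rfl

theorem redW_eq_nil_iff (w : Word α) :
    redW w = [] ↔ (letI := Classical.decEq α; FreeGroup.mk w = 1) := by
  letI := Classical.decEq α
  rw [show (1 : FreeGroup α) = FreeGroup.mk [] from rfl]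
  rw [show ([] : Word α) = redW ([] : Word α) from rfl]
  exact redW_eq_iff_mk w []

theorem mk_cancel (y : α × Bool) :
    (letI := Classical.decEq α;
      FreeGroup.mk [letterInv y] * FreeGroup.mk [y]) = 1 := by
  letI := Classical.decEq α
  rw [FreeGroup.mul_mk]
  rw [← redW_eq_nil_iff]
  show FreeGroup.reduce [letterInv y, y] = []
  rw [show [letterInv y, y] = letterInv y :: [y] from rfl, FreeGroup.reduce.cons]
  simp [letterInv, FreeGroup.reduce_singleton]

theorem mk_cancel' (y : α × Bool) :
    (letI := Classical.decEq α;
      FreeGroup.mk [y] * FreeGroup.mk [letterInv y]) = 1 := by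
  have := mk_cancel (α := α) (letterInv y)
  simpa [letterInv] using this

/-- Characterization: a word is reduced iff it has no cancelling adjacent pair. -/
theorem redW_eq_self_iff (w : Word α) :
    redW w = w ↔ ∀ (w₁ w₂ : Word α) (x : α × Bool), w ≠ w₁ ++ x :: letterInv x :: w₂ := by
  letI := Classical.decEq α
  constructor
  · intro h w₁ w₂ x hw
    have : FreeGroup.reduce w = w₁ ++ (x.1, x.2) :: (x.1, !x.2) :: w₂ := by
      rw [show ((x.1, x.2) : α × Bool) = x from rfl]
      rw [show ((x.1, !x.2) : α × Bool) = letterInv x from rfl]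
      rw [← hw]; exact h
    exact FreeGroup.reduce.not this
  · intro hnc
    induction w with
    | nil => rfl
    | cons z w ih =>
      have hw : redW w = w := by
        apply ih
        intro w₁ w₂ x hx
        exact hnc (z :: w₁) w₂ x (by rw [hx]; rfl)
      show FreeGroup.reduce (z :: w) = z :: w
      rw [FreeGroup.reduce.cons]
      have hw' : FreeGroup.reduce w = w := hw
      rw [hw']
      cases w with
      | nil => rfl
      | cons y t =>
        have hne : ¬(z.1 = y.1 ∧ z.2 = !y.2) := by
          rintro ⟨h1, h2⟩
          exact hnc [] t z (by
            simp only [List.nil_append]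
            congr 1
            show y :: t = letterInv z :: t
            congr 1
            show y = (z.1, !z.2)
            rw [h1, h2, Bool.not_not])
        simp only [if_neg hne]

/-- If a word is reduced then so is every suffix. -/
theorem redW_suffix {u v : Word α} (h : redW (u ++ v) = u ++ v) : redW v = v := by
  rw [redW_eq_self_iff] at h ⊢
  intro w₁ w₂ x hx
  exact h (u ++ w₁) w₂ x (by rw [hx, List.append_assoc])

/-- The key splitting lemma: if `redW u = x :: v` then `u` splits as
`u₁ ++ x :: u₂` with `redW u₁ = []` and `redW u₂ = v`. -/
theorem redW_split :
    ∀ (n : ℕ) (u : Word α), u.length ≤ n → ∀ (x : α × Bool) (v : Word α),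
      redW u = x :: v →
      ∃ u₁ u₂, u = u₁ ++ x :: u₂ ∧ redW u₁ = [] ∧ redW u₂ = v := by
  letI := Classical.decEq α
  intro n
  induction n with
  | zero =>
    intro u hu x v h
    have : u = [] := List.length_eq_zero_iff.1 (Nat.le_zero.1 hu)
    rw [this] at h
    exact absurd h (by simp [redW_nil])
  | succ m ih =>
    intro u hu x v h
    cases u with
    | nil => exact absurd h (by simp [redW_nil])
    | cons z u' =>
      have hu' : u'.length ≤ m := Nat.le_of_succ_le_succ hu
      have h' : FreeGroup.reduce (z :: u') = x :: v := h
      rw [FreeGroup.reduce.cons] at h'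
      cases hr : (FreeGroup.reduce u' : Word α) with
      | nil =>
        rw [hr] at h'
        simp only [List.casesOn] at h'
        injection h' with h1 h2
        exact ⟨[], u', by simp [h1], redW_nil, by rw [← h2]; exact hr⟩
      | cons y t =>
        rw [hr] at h'
        simp only at h'
        by_cases hc : z.1 = y.1 ∧ z.2 = !y.2
        · rw [if_pos hc] at h'
          -- t = x :: v ; u' reduces to y :: t
          rcases ih u' hu' y t hr with ⟨a, b, hab, ha, hb⟩
          have hbt : redW b = x :: v := by rw [hb, h']
          have hblen : b.length ≤ m := by
            have : b.length < u'.length := by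
              rw [hab]; simp only [List.length_append, List.length_cons]; omega
            omega
          rcases ih b hblen x v hbt with ⟨b₁, b₂, hbb, hb₁, hb₂⟩
          refine ⟨z :: (a ++ y :: b₁), b₂, ?_, ?_, hb₂⟩
          · rw [hab, hbb]; simp [List.append_assoc]
          · rw [redW_eq_nil_iff]
            have hz : z = letterInv y := by
              rcases hc with ⟨h1, h2⟩
              show z = (y.1, !y.2)
              rw [← h1, ← h2]
            have hma : FreeGroup.mk a = 1 := (redW_eq_nil_iff a).1 ha
            have hmb : FreeGroup.mk b₁ = 1 := (redW_eq_nil_iff b₁).1 hb₁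
            have : FreeGroup.mk (z :: (a ++ y :: b₁))
                = FreeGroup.mk [z] * (FreeGroup.mk a * (FreeGroup.mk [y] * FreeGroup.mk b₁)) := by
              simp only [FreeGroup.mul_mk]; rfl
            rw [this, hma, hmb, one_mul, mul_one, hz]
            exact mk_cancel y
        · rw [if_neg hc] at h'
          injection h' with h1 h2
          exact ⟨[], u', by simp [h1], redW_nil, by rw [← h2]; exact hr⟩

theorem redW_append_nil_left {u₁ : Word α} (h : redW u₁ = []) (x : α × Bool) :
    redW (u₁ ++ [x]) = [x] := by
  letI := Classical.decEq α
  have : redW (u₁ ++ [x]) = redW [x] := by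
    rw [redW_eq_iff_mk, ← FreeGroup.mul_mk]
    rw [(redW_eq_nil_iff u₁).1 h, one_mul]
  rw [this]; rfl

end RedToolkit

/-! ### The automaton for `Reduced` -/

section ReducedAut

variable {α : Type}

/-- The (deterministic) automaton recognizing reduced words. -/
def reducedAut (α : Type) : Automaton (α × Bool) (Option (α × Bool)) where
  start := none
  accept := Set.univ
  edges := {e | e.2.2 = some e.2.1 ∧ ∀ y, e.1 = some y → e.2.1 ≠ letterInv y}

theorem reducedAut_target {s q : Option (α × Bool)} {x : α × Bool}
    (h : (s, x, q) ∈ (reducedAut α).edges) : q = some x := h.1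

theorem reducedAut_path_last {s q : Option (α × Bool)} {u : Word α} {x : α × Bool}
    (h : (reducedAut α).Path s (u ++ [x]) q) : q = some x := by
  rcases Automaton.Path.split h with ⟨r, _, h2⟩
  rcases Automaton.path_cons_iff.1 h2 with ⟨r', e, h3⟩
  rw [Automaton.path_nil_iff.1 h3] at e
  exact reducedAut_target e

theorem reducedAut_lang : (reducedAut α).lang = Reduced := by
  ext w
  constructor
  · rintro ⟨t, -, hpath⟩
    show redW w = w
    rw [redW_eq_self_iff]
    intro w₁ w₂ x hw
    rw [hw] at hpath
    have : w₁ ++ x :: letterInv x :: w₂ = (w₁ ++ [x]) ++ (letterInv x :: w₂) := by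
      simp
    rw [this] at hpath
    rcases Automaton.Path.split hpath with ⟨r, h1, h2⟩
    have hr : r = some x := reducedAut_path_last h1
    rcases Automaton.path_cons_iff.1 h2 with ⟨r', e, -⟩
    exact (e.2 x hr) rfl
  · intro hw
    show ∃ t ∈ (reducedAut α).accept, (reducedAut α).Path none w t
    have key : ∀ (w : Word α) (s : Option (α × Bool)),
        (∀ (w₁ w₂ : Word α) (x : α × Bool), w ≠ w₁ ++ x :: letterInv x :: w₂) →
        (∀ y x w', s = some y → w = x :: w' → x ≠ letterInv y) →
        ∃ t, (reducedAut α).Path s w t := by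
      intro w
      induction w with
      | nil => exact fun s _ _ => ⟨s, .nil s⟩
      | cons x w' ih =>
        intro s hnc hs
        have hedge : (s, x, some x) ∈ (reducedAut α).edges := by
          refine ⟨rfl, ?_⟩
          intro y hy
          exact hs y x w' hy rfl
        have hnc' : ∀ (w₁ w₂ : Word α) (y : α × Bool), w' ≠ w₁ ++ y :: letterInv y :: w₂ := by
          intro w₁ w₂ y hy
          exact hnc (x :: w₁) w₂ y (by rw [hy]; rfl)
        have hs' : ∀ y z w'', (some x : Option (α × Bool)) = some y → w' = z :: w'' →
            z ≠ letterInv y := by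
          rintro y z w'' hy rfl
          injection hy with hy
          intro hz
          exact hnc [] w'' x (by simp [hz, hy])
        rcases ih (some x) hnc' hs' with ⟨t, hp⟩
        exact ⟨t, .cons hedge hp⟩
    rcases key w none ((redW_eq_self_iff w).1 hw) (by rintro y x w' ⟨⟩) with ⟨t, hp⟩
    exact ⟨t, trivial, hp⟩

theorem reduced_isRegular [Finite α] : (Reduced : Language (α × Bool)).IsRegular := by
  have : Fintype α := Fintype.ofFinite α
  rw [← reducedAut_lang]
  exact Automaton.lang_isRegular _

end ReducedAut

/-! ### Benois' construction: the reduction of a regular language is regular -/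

section Benois

variable {α Q : Type}

/-- The Benois automaton: edges are labelled by the reductions of path labels. -/
noncomputable def benois (M : Automaton (α × Bool) Q) : Automaton (α × Bool) Q where
  start := M.start
  accept := {p | ∃ w t, t ∈ M.accept ∧ M.Path p w t ∧ redW w = []}
  edges := {e | ∃ w, M.Path e.1 w e.2.2 ∧ redW w = [e.2.1]}

theorem benois_path_red (M : Automaton (α × Bool) Q) :
    ∀ (n : ℕ) (u : Word α), u.length ≤ n → ∀ p q, M.Path p u q → redW u ≠ [] →
      (benois M).Path p (redW u) q := by
  intro n
  induction n with
  | zero =>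
    intro u hu p q hpath hne
    have : u = [] := List.length_eq_zero_iff.1 (Nat.le_zero.1 hu)
    rw [this] at hne
    exact absurd redW_nil hne
  | succ m ih =>
    intro u hu p q hpath hne
    cases hr : redW u with
    | nil => exact absurd hr hne
    | cons x v =>
      rcases redW_split u.length u le_rfl x v hr with ⟨u₁, u₂, huu, h₁, h₂⟩
      rw [huu] at hpath
      rcases Automaton.Path.split hpath with ⟨r, hp1, hp2⟩
      rcases Automaton.path_cons_iff.1 hp2 with ⟨r', e, hp3⟩
      cases hv : v with
      | nil =>
        -- single Benois edge labelled x, witnessed by u itself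
        have hedge : (p, x, q) ∈ (benois M).edges := by
          refine ⟨u, ?_, ?_⟩
          · rw [huu]; exact hpath
          · rw [hr, hv]
        exact .cons hedge (.nil q)
      | cons y v' =>
        have hedge : (p, x, r') ∈ (benois M).edges := by
          refine ⟨u₁ ++ [x], ?_, redW_append_nil_left h₁ x⟩
          exact Automaton.Path.append hp1 (.cons e (.nil r'))
        have hlen : u₂.length ≤ m := by
          have : u.length = u₁.length + (u₂.length + 1) := by
            rw [huu]; simp
          omega
        have h₂' : redW u₂ ≠ [] := by rw [h₂, hv]; simp
        have htail := ih u₂ hlen r' q hp3 h₂'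
        rw [h₂, hv] at htail
        exact .cons hedge htail
      
theorem benois_path_exists {M : Automaton (α × Bool) Q} :
    ∀ {p q : Q} {v : Word α}, (benois M).Path p v q →
      ∃ w, M.Path p w q ∧ redW w = redW v := by
  intro p q v hpath
  induction hpath with
  | nil q => exact ⟨[], .nil q, rfl⟩
  | @cons p q r x v' e _ ih =>
    rcases e with ⟨w₁, hw₁, hr₁⟩
    rcases ih with ⟨w₂, hw₂, hr₂⟩
    refine ⟨w₁ ++ w₂, Automaton.Path.append hw₁ hw₂, ?_⟩
    letI := Classical.decEq α
    rw [redW_eq_iff_mk]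
    rw [← FreeGroup.mul_mk]
    have e₁ : FreeGroup.mk w₁ = FreeGroup.mk [x] := by
      rw [← redW_eq_iff_mk, hr₁]; rfl
    have e₂ : FreeGroup.mk w₂ = FreeGroup.mk v' := (redW_eq_iff_mk w₂ v').1 hr₂
    rw [e₁, e₂, FreeGroup.mul_mk]
    rfl

theorem benois_lang (M : Automaton (α × Bool) Q) (v : Word α) :
    v ∈ red M.lang ↔ v ∈ (benois M).lang ∧ v ∈ Reduced := by
  constructor
  · rintro ⟨u, hu, rfl⟩
    rcases hu with ⟨t, ht, hpath⟩
    refine ⟨?_, redW_redW u⟩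
    by_cases hne : redW u = []
    · rw [hne]
      refine ⟨M.start, ⟨u, t, ht, hpath, hne⟩, .nil _⟩
    · refine ⟨t, ⟨[], t, ht, .nil t, redW_nil⟩, ?_⟩
      exact benois_path_red M u.length u le_rfl _ _ hpath hne
  · rintro ⟨⟨s, hs, hpath⟩, hred⟩
    rcases hs with ⟨w₃, t, ht, hp₃, h₃⟩
    rcases benois_path_exists hpath with ⟨w, hw, hrw⟩
    refine ⟨w ++ w₃, ⟨t, ht, Automaton.Path.append hw hp₃⟩, ?_⟩
    letI := Classical.decEq α
    show redW (w ++ w₃) = v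
    have : redW (w ++ w₃) = redW v := by
      rw [redW_eq_iff_mk, ← FreeGroup.mul_mk]
      rw [(redW_eq_nil_iff w₃).1 h₃, mul_one]
      rw [← redW_eq_iff_mk, hrw]
    rw [this]
    exact hred

end Benois

/-! ### The substitution automaton -/

section Subst

variable {α α' Q : Type} (f : α × Bool → Word α') (M : Automaton (α × Bool) Q)

/-- Application of the substitution `f` to a word. -/
def FSub (w : Word α) : Word α' := (w.map f).flatten

@[simp] theorem FSub_nil : FSub f ([] : Word α) = [] := rfl

@[simp] theorem FSub_cons (x : α × Bool) (w : Word α) :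
    FSub f (x :: w) = f x ++ FSub f w := rfl

theorem FSub_append (u v : Word α) : FSub f (u ++ v) = FSub f u ++ FSub f v := by
  simp [FSub]

/-- Pending suffixes for the substitution automaton. -/
def SufT : Type := {l : Word α' // l = [] ∨ ∃ b, l <:+ f b}

instance [Finite α] : Finite (SufT f) := by
  have : {l : Word α' | l = [] ∨ ∃ b, l <:+ f b}.Finite := by
    have : {l : Word α' | l = [] ∨ ∃ b, l <:+ f b}
        = insert [] (⋃ b, {l | l <:+ f b}) := by
      ext l; simp [Set.mem_iUnion]
    rw [this]
    refine Set.Finite.insert _ (Set.finite_iUnion fun b => ?_)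
    have : {l : Word α' | l <:+ f b} ⊆ {l | l ∈ (f b).tails} := by
      intro l hl; exact (List.mem_tails _ _).2 hl
    exact Set.Finite.subset ((f b).tails.finite_toSet) this
  exact this.to_subtype

/-- The empty pending suffix. -/
def emptySuf : SufT f := ⟨[], Or.inl rfl⟩

/-- The ε-moves of the substitution automaton. -/
def S0 : (Q × SufT f) → (Q × SufT f) → Prop := fun s s' =>
  s.2.1 = [] ∧ ∃ b, (s.1, b, s'.1) ∈ M.edges ∧ s'.2.1 = f b

/-- The substitution automaton. -/
def substAut : Automaton (α' × Bool) (Q × SufT f) where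
  start := (M.start, emptySuf f)
  accept := {s | ∃ t, t ∈ M.accept ∧ Relation.ReflTransGen (S0 f M) s (t, emptySuf f)}
  edges := {e | ∃ m : SufT f, m.1 = e.2.1 :: e.2.2.2.1 ∧
      Relation.ReflTransGen (S0 f M) e.1 (e.2.2.1, m)}

theorem S0_chain_eq {s z : Q × SufT f} (h : Relation.ReflTransGen (S0 f M) s z)
    (hne : s.2.1 ≠ []) : z = s := by
  rcases Relation.ReflTransGen.cases_head h with rfl | ⟨c, hc, -⟩
  · rfl
  · exact absurd hc.1 hne

theorem S0_chain_to_empty {s : Q × SufT f} {q' : Q}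
    (h : Relation.ReflTransGen (S0 f M) s (q', emptySuf f)) :
    s.2.1 = [] ∧ ∃ w, M.Path s.1 w q' ∧ FSub f w = [] := by
  induction h using Relation.ReflTransGen.head_induction_on with
  | refl => exact ⟨rfl, [], .nil q', rfl⟩
  | head h' _ ih =>
    rcases h' with ⟨hnil, b, he, hfb⟩
    rcases ih with ⟨hnil', w₁, hp₁, hF₁⟩
    refine ⟨hnil, b :: w₁, .cons he hp₁, ?_⟩
    have hfb' : f b = [] := hfb ▸ hnil'
    rw [FSub_cons, hfb', hF₁]
    rfl

theorem S0_chain_to_ne {q : Q} {l : SufT f} {r : Q} {m : SufT f}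
    (h : Relation.ReflTransGen (S0 f M) (q, l) (r, m)) (hne : m.1 ≠ []) :
    ∃ w, M.Path q w r ∧ l.1 ++ FSub f w = m.1 := by
  rcases Relation.ReflTransGen.cases_tail h with heq | ⟨⟨z1, z2⟩, hch, hz⟩
  · have h1 : r = q := congrArg Prod.fst heq
    have h2 : m = l := congrArg Prod.snd heq
    refine ⟨[], ?_, by simp [h2]⟩
    rw [← h1]; exact .nil r
  · rcases hz with ⟨hznil, b, he, hfb⟩
    have hz2 : z2 = emptySuf f := Subtype.ext hznil
    rw [hz2] at hch
    rcases S0_chain_to_empty f M hch with ⟨hl, w₀, hp₀, hF₀⟩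
    have he' : (z1, b, r) ∈ M.edges := he
    have hfb' : f b = m.1 := hfb.symm
    refine ⟨w₀ ++ [b], Automaton.Path.append hp₀ (.cons he' (.nil r)), ?_⟩
    have hl' : l.1 = [] := hl
    have hFb : FSub f [b] = f b := by simp [FSub]
    rw [hl', List.nil_append, FSub_append, hF₀, List.nil_append, hFb, hfb']

theorem substAut_sound :
    ∀ {p s : Q × SufT f} {v : Word α'}, (substAut f M).Path p v s →
    ∀ q', Relation.ReflTransGen (S0 f M) s (q', emptySuf f) →
    ∃ w, M.Path p.1 w q' ∧ v = p.2.1 ++ FSub f w := by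
  intro p s v hpath
  induction hpath with
  | nil q =>
    intro q' hchain
    rcases S0_chain_to_empty f M hchain with ⟨hnil, w, hp, hF⟩
    exact ⟨w, hp, by rw [hnil, hF]; rfl⟩
  | @cons p s₂ s x v' e _ ih =>
    intro q' hchain
    rcases e with ⟨m, hm0, hch0⟩
    have hm : m.1 = x :: s₂.2.1 := hm0
    have hch : Relation.ReflTransGen (S0 f M) p (s₂.1, m) := hch0
    rcases ih q' hchain with ⟨w₁, hp₁, hv'⟩
    rcases hpl : p.2.1 with _ | ⟨c, l'⟩
    · -- pending empty: a genuine ε-chain then the start of a new block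
      have hmne : m.1 ≠ [] := by rw [hm]; simp
      have hch' : Relation.ReflTransGen (S0 f M) (p.1, p.2) (s₂.1, m) := by
        rwa [Prod.mk.eta]
      rcases S0_chain_to_ne f M hch' hmne with ⟨w₀, hp₀, hF₀⟩
      refine ⟨w₀ ++ w₁, Automaton.Path.append hp₀ hp₁, ?_⟩
      rw [hpl, List.nil_append] at hF₀
      rw [List.nil_append, FSub_append, hF₀, hm, hv']
      rfl
    · -- pending nonempty: the edge just consumes the head of the pending suffix
      have hne : p.2.1 ≠ [] := by rw [hpl]; simp
      have heqp := S0_chain_eq f M hch hne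
      have hs₂1 : s₂.1 = p.1 := by rw [← heqp]
      have hm2 : m = p.2 := by rw [← heqp]
      have hx : (c : α' × Bool) = x ∧ s₂.2.1 = l' := by
        have h5 : m.1 = c :: l' := by rw [hm2, hpl]
        rw [hm] at h5
        injection h5 with h6 h7
        exact ⟨h6.symm, h7⟩
      refine ⟨w₁, by rwa [← hs₂1], ?_⟩
      rw [← hx.1, List.cons_append, ← hx.2, ← hv']

theorem substAut_prepend {s₀ s₁ s : Q × SufT f} {x : α' × Bool} {v : Word α'}
    (hstep : S0 f M s₀ s₁) (hpath : (substAut f M).Path s₁ (x :: v) s) :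
    (substAut f M).Path s₀ (x :: v) s := by
  rcases Automaton.path_cons_iff.1 hpath with ⟨s₂, e, hrest⟩
  rcases e with ⟨m, hm, hch⟩
  exact .cons ⟨m, hm, Relation.ReflTransGen.head hstep hch⟩ hrest

theorem substAut_consume :
    ∀ (l : Word α') (h : l = [] ∨ ∃ b, l <:+ f b) (q : Q),
      (substAut f M).Path (q, ⟨l, h⟩) l (q, emptySuf f) := by
  intro l
  induction l with
  | nil =>
    intro h q
    have : (⟨[], h⟩ : SufT f) = emptySuf f := Subtype.ext rfl
    rw [this]
    exact .nil _
  | cons c l' ih =>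
    intro h q
    have h' : l' = [] ∨ ∃ b, l' <:+ f b := by
      rcases h with h | ⟨b, hb⟩
      · exact absurd h (by simp)
      · exact Or.inr ⟨b, (List.suffix_cons c l').trans hb⟩
    refine .cons ⟨⟨c :: l', h⟩, rfl, Relation.ReflTransGen.refl⟩ (ih h' q)

theorem substAut_complete :
    ∀ {w : Word α} {q q' : Q}, M.Path q w q' →
      ∃ s, (substAut f M).Path (q, emptySuf f) (FSub f w) s ∧
        Relation.ReflTransGen (S0 f M) s (q', emptySuf f) := by
  intro w q q' hpath
  induction hpath with
  | nil q => exact ⟨(q, emptySuf f), .nil _, Relation.ReflTransGen.refl⟩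
  | @cons q q₁ q' b w e _ ih =>
    rcases ih with ⟨s, hp, hch⟩
    cases hfb : f b with
    | nil =>
      have hstep : S0 f M (q, emptySuf f) (q₁, emptySuf f) :=
        ⟨rfl, b, e, by rw [hfb]; rfl⟩
      rw [show FSub f (b :: w) = FSub f w by rw [FSub_cons, hfb]; rfl]
      cases hFw : FSub f w with
      | nil =>
        rw [hFw] at hp
        have hs : s = (q₁, emptySuf f) := (Automaton.path_nil_iff.1 hp).symm
        exact ⟨(q, emptySuf f), .nil _,
          Relation.ReflTransGen.head hstep (hs ▸ hch)⟩
      | cons x rest =>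
        rw [hFw] at hp
        exact ⟨s, substAut_prepend f M hstep hp, hch⟩
    | cons x l =>
      have hlSuf : l = [] ∨ ∃ b', l <:+ f b' :=
        Or.inr ⟨b, by rw [hfb]; exact List.suffix_cons x l⟩
      have hfbSuf : f b = [] ∨ ∃ b', f b <:+ f b' := Or.inr ⟨b, List.suffix_refl _⟩
      have hedge : ((q, emptySuf f), x, (q₁, (⟨l, hlSuf⟩ : SufT f))) ∈ (substAut f M).edges := by
        refine ⟨⟨f b, hfbSuf⟩, by show f b = x :: l; exact hfb, ?_⟩
        exact Relation.ReflTransGen.single ⟨rfl, b, e, rfl⟩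
      refine ⟨s, ?_, hch⟩
      have h1 : (substAut f M).Path (q, emptySuf f) (x :: l) (q₁, emptySuf f) :=
        .cons hedge (substAut_consume f M l hlSuf q₁)
      have h2 := Automaton.Path.append h1 hp
      rw [show FSub f (b :: w) = (x :: l) ++ FSub f w by rw [FSub_cons, hfb]]
      exact h2

theorem substAut_lang (v : Word α') :
    v ∈ (substAut f M).lang ↔ ∃ w ∈ M.lang, v = FSub f w := by
  constructor
  · rintro ⟨s, hs, hpath⟩
    rcases hs with ⟨t, ht, hch⟩
    rcases substAut_sound f M hpath t hch with ⟨w, hp, hv⟩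
    exact ⟨w, ⟨t, ht, hp⟩, by rw [hv]; rfl⟩
  · rintro ⟨w, ⟨t, ht, hpath⟩, rfl⟩
    rcases substAut_complete f M hpath with ⟨s, hp, hch⟩
    exact ⟨s, ⟨t, ht, hch⟩, hp⟩

end Subst

/-! ### Evaluation lemmas -/

section EvLemmas

variable {α α' G : Type} [Group G]

theorem wordInv_nil : wordInv ([] : Word α) = [] := rfl

theorem wordInv_cons (x : α × Bool) (w : Word α) :
    wordInv (x :: w) = wordInv w ++ [letterInv x] := by
  simp [wordInv]

theorem wordInv_append (u v : Word α) : wordInv (u ++ v) = wordInv v ++ wordInv u := by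
  simp [wordInv]

theorem ev_nil (π : FreeMonoid (α × Bool) →* G) : ev π [] = 1 := by
  show π (FreeMonoid.ofList []) = 1
  rw [show (FreeMonoid.ofList ([] : List (α × Bool))) = 1 from rfl, map_one]

theorem ev_append (π : FreeMonoid (α × Bool) →* G) (u v : Word α) :
    ev π (u ++ v) = ev π u * ev π v := by
  show π (FreeMonoid.ofList (u ++ v)) = _
  rw [show FreeMonoid.ofList (u ++ v)
      = FreeMonoid.ofList u * FreeMonoid.ofList v from rfl, map_mul]
  rfl

theorem ev_cons (π : FreeMonoid (α × Bool) →* G) (x : α × Bool) (w : Word α) :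
    ev π (x :: w) = π (FreeMonoid.of x) * ev π w := by
  show π (FreeMonoid.ofList (x :: w)) = _
  rw [show FreeMonoid.ofList (x :: w)
      = FreeMonoid.of x * FreeMonoid.ofList w from rfl, map_mul]
  rfl

theorem mk_single_false (a : α) :
    (letI := Classical.decEq α; FreeGroup.mk [(a, false)]) = (FreeGroup.of a)⁻¹ := by
  letI := Classical.decEq α
  rw [show (FreeGroup.of a : FreeGroup α) = FreeGroup.mk [(a, true)] from rfl,
    FreeGroup.inv_mk]
  rfl

/-- Evaluation of a matched morphism factors through the free group. -/
theorem ev_mk_eq {π : FreeMonoid (α × Bool) →* G} (hπ : IsMEpi π) (w : Word α) :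
    ev π w = (letI := Classical.decEq α;
      FreeGroup.lift (fun a => π (FreeMonoid.of (a, true))) (FreeGroup.mk w)) := by
  letI := Classical.decEq α
  induction w with
  | nil =>
    rw [ev_nil, show FreeGroup.mk ([] : Word α) = 1 from rfl, map_one]
  | cons x w ih =>
    rw [ev_cons, ih,
      show FreeGroup.mk (x :: w) = FreeGroup.mk [x] * FreeGroup.mk w by
        rw [FreeGroup.mul_mk]; rfl,
      map_mul]
    congr 1
    rcases x with ⟨a, b⟩
    cases b
    · rw [mk_single_false, map_inv, FreeGroup.lift_apply_of]
      have hm := hπ.matched a true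
      simp only [Bool.not_true] at hm
      rw [← hm]
    · rw [show FreeGroup.mk [((a : α), true)] = FreeGroup.of a from rfl,
        FreeGroup.lift_apply_of]

theorem ev_redW {π : FreeMonoid (α × Bool) →* G} (hπ : IsMEpi π) (w : Word α) :
    ev π (redW w) = ev π w := by
  letI := Classical.decEq α
  rw [ev_mk_eq hπ, ev_mk_eq hπ, mk_redW]

theorem ev_wordInv {π : FreeMonoid (α × Bool) →* G} (hπ : IsMEpi π) (w : Word α) :
    ev π (wordInv w) = (ev π w)⁻¹ := by
  letI := Classical.decEq α
  rw [ev_mk_eq hπ, ev_mk_eq hπ, wordInv_eq_invRev, ← FreeGroup.inv_mk, map_inv]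

/-- Substitution compatible with formal inverses induces a map on free groups. -/
theorem mk_FSub (f : α × Bool → Word α') (hf : ∀ x, f (letterInv x) = wordInv (f x))
    {u u' : Word α} (h : (letI := Classical.decEq α; FreeGroup.mk u = FreeGroup.mk u')) :
    (letI := Classical.decEq α';
      FreeGroup.mk (FSub f u) = FreeGroup.mk (FSub f u')) := by
  letI := Classical.decEq α
  letI := Classical.decEq α'
  have key : ∀ w : Word α, FreeGroup.mk (FSub f w)
      = FreeGroup.lift (fun a => FreeGroup.mk (f (a, true))) (FreeGroup.mk w) := by
    intro w
    induction w with
    | nil =>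
      rw [show FSub f [] = [] from rfl,
        show FreeGroup.mk ([] : Word α) = 1 from rfl, map_one]
      rfl
    | cons x w ih =>
      rw [FSub_cons, ← FreeGroup.mul_mk, ih,
        show FreeGroup.mk (x :: w) = FreeGroup.mk [x] * FreeGroup.mk w by
          rw [FreeGroup.mul_mk]; rfl,
        map_mul]
      congr 1
      rcases x with ⟨a, b⟩
      cases b
      · have h1 : f ((a : α), false) = wordInv (f (a, true)) := by
          have h2 := hf (a, true)
          simpa [letterInv] using h2
        rw [h1, wordInv_eq_invRev, ← FreeGroup.inv_mk, mk_single_false, map_inv,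
          FreeGroup.lift_apply_of]
      · rw [show FreeGroup.mk [((a : α), true)] = FreeGroup.of a from rfl,
          FreeGroup.lift_apply_of]
  rw [key, key, h]

theorem redW_append_redW (u v : Word α) :
    redW (redW u ++ redW v) = redW (u ++ v) := by
  letI := Classical.decEq α
  rw [redW_eq_iff_mk, ← FreeGroup.mul_mk, ← FreeGroup.mul_mk, mk_redW, mk_redW]

/-- The reduction of the substitution image of a regular language is regular. -/
theorem red_FSub_isRegular {α α' : Type} [Finite α] [Finite α']
    (f : α × Bool → Word α') {L : Language (α × Bool)} (hL : L.IsRegular) :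
    (red {v | ∃ u ∈ L, v = FSub f u}).IsRegular := by
  classical
  obtain ⟨Q, hQ, M, hM⟩ := Automaton.exists_automaton_of_isRegular hL
  haveI := hQ
  haveI : Fintype α' := Fintype.ofFinite α'
  haveI : Fintype α := Fintype.ofFinite α
  have hsub : (substAut f M).lang = {v | ∃ u ∈ L, v = FSub f u} := by
    ext v; rw [substAut_lang, hM]; exact Iff.rfl
  have heq : red {v | ∃ u ∈ L, v = FSub f u}
      = (Automaton.prod (benois (substAut f M)) (reducedAut α')).lang := by
    ext v
    rw [Automaton.mem_prod_lang, ← hsub, reducedAut_lang]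
    exact benois_lang (substAut f M) v
  rw [heq]
  exact Automaton.lang_isRegular _

end EvLemmas

end Stallings
open Stallings in
/-- The existence of a Stallings section is independent of the m-epi:
if `π : Ã* → G` and `π' : Ã'* → G` are m-epis and `π` admits a Stallings section,
then so does `π'`. -/
theorem stallings_section_independence {α α' G : Type} [Finite α] [Finite α'] [Group G]
    (π : FreeMonoid (α × Bool) →* G) (hπ : IsMEpi π)
    (π' : FreeMonoid (α' × Bool) →* G) (hπ' : IsMEpi π')
    (h : ∃ S : Language (α × Bool), IsStallingsSection π S) :
    ∃ S' : Language (α' × Bool), IsStallingsSection π' S' := by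
  classical
  obtain ⟨S, hS⟩ := h
  -- choose words over Ã' representing the images of the letters of A
  have hchoice : ∀ a : α, ∃ w : Word α', ev π' w = π (FreeMonoid.of (a, true)) := by
    intro a
    obtain ⟨x, hx⟩ := hπ'.surjective (π (FreeMonoid.of (a, true)))
    exact ⟨FreeMonoid.toList x, by
      show π' (FreeMonoid.ofList (FreeMonoid.toList x)) = _
      rw [FreeMonoid.ofList_toList]; exact hx⟩
  choose rep hrep using hchoice
  let f : α × Bool → Word α' := fun x => cond x.2 (rep x.1) (wordInv (rep x.1))
  have hf_inv : ∀ x, f (letterInv x) = wordInv (f x) := by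
    rintro ⟨a, b⟩
    cases b
    · show rep a = wordInv (wordInv (rep a))
      rw [wordInv_wordInv]
    · rfl
  have hf_ev : ∀ x, ev π' (f x) = π (FreeMonoid.of x) := by
    rintro ⟨a, b⟩
    cases b
    · show ev π' (wordInv (rep a)) = _
      rw [ev_wordInv hπ', hrep a]
      have hm := hπ.matched a true
      simp only [Bool.not_true] at hm
      rw [hm]
    · exact hrep a
  have hF_ev : ∀ w : Word α, ev π' (FSub f w) = ev π w := by
    intro w
    induction w with
    | nil => rw [FSub_nil, ev_nil, ev_nil]
    | cons x w ih => rw [FSub_cons, ev_append, hf_ev, ih, ev_cons]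
  have hF_inv : ∀ w : Word α, FSub f (wordInv w) = wordInv (FSub f w) := by
    intro w
    induction w with
    | nil => rfl
    | cons x w ih =>
      rw [wordInv_cons, FSub_append, ih]
      rw [show FSub f (x :: w) = f x ++ FSub f w from rfl, wordInv_append]
      congr 1
      show f (letterInv x) ++ FSub f ([] : Word α) = wordInv (f x)
      rw [show FSub f ([] : Word α) = [] from rfl, List.append_nil, hf_inv]
  have hF_mk : ∀ {u u' : Word α}, redW u = redW u' →
      redW (FSub f u) = redW (FSub f u') := by
    intro u u' huu
    rw [redW_eq_iff_mk] at huu ⊢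
    exact mk_FSub f hf_inv huu
  set S' : Language (α' × Bool) := red {v | ∃ u ∈ S, v = FSub f u} with hS'def
  have memS' : ∀ v, v ∈ S' ↔ ∃ u ∈ S, v = redW (FSub f u) := by
    intro v
    constructor
    · rintro ⟨v0, ⟨u, hu, rfl⟩, rfl⟩
      exact ⟨u, hu, rfl⟩
    · rintro ⟨u, hu, rfl⟩
      exact ⟨FSub f u, ⟨u, hu, rfl⟩, rfl⟩
  have hsub' : ∀ g : G, sub S' π' {g} = red {v | ∃ u ∈ sub S π {g}, v = FSub f u} := by
    intro g
    ext v
    constructor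
    · rintro ⟨hv, hev⟩
      rcases (memS' v).1 hv with ⟨u, hu, rfl⟩
      have hevu : ev π u = g := by
        have h1 : ev π' (redW (FSub f u)) = ev π u := by rw [ev_redW hπ', hF_ev]
        rw [← h1]; exact hev
      exact ⟨FSub f u, ⟨u, ⟨hu, hevu⟩, rfl⟩, rfl⟩
    · rintro ⟨v0, ⟨u, ⟨hu, hev⟩, rfl⟩, rfl⟩
      refine ⟨(memS' _).2 ⟨u, hu, rfl⟩, ?_⟩
      show ev π' (redW (FSub f u)) ∈ ({g} : Set G)
      rw [ev_redW hπ', hF_ev]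
      exact hev
  refine ⟨S', ?_, ?_, ?_, ?_, ?_, ?_⟩
  · -- regular
    rw [hS'def]
    exact red_FSub_isRegular f hS.regular
  · -- reduced
    intro w hw
    rcases (memS' w).1 hw with ⟨u, hu, rfl⟩
    show redW (redW (FSub f u)) = redW (FSub f u)
    exact redW_redW _
  · -- closed under inversion
    intro w hw
    rcases (memS' w).1 hw with ⟨u, hu, rfl⟩
    refine (memS' _).2 ⟨wordInv u, hS.inv_mem u hu, ?_⟩
    rw [hF_inv, redW_wordInv]
  · -- section
    intro g
    obtain ⟨u, hu, hev⟩ := hS.exists_rep g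
    exact ⟨redW (FSub f u), (memS' _).2 ⟨u, hu, rfl⟩, by
      rw [ev_redW hπ', hF_ev, hev]⟩
  · -- (S1)
    intro g
    rw [hsub' g]
    exact red_FSub_isRegular f (hS.s1 g)
  · -- (S2)
    intro g h'
    intro v hv
    rw [hsub'] at hv
    rcases hv with ⟨v0, ⟨u, hu, rfl⟩, rfl⟩
    have hs2 := hS.s2 g h' u hu
    rcases hs2 with ⟨w0, hw0, hu0⟩
    rcases Language.mem_mul.1 hw0 with ⟨a, ha, b, hb, rfl⟩
    have hmemA : redW (FSub f a) ∈ sub S' π' {g} := by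
      have hA : redW (FSub f a) ∈ red {v | ∃ u ∈ sub S π {g}, v = FSub f u} :=
        ⟨FSub f a, ⟨a, ha, rfl⟩, rfl⟩
      rw [← hsub' g] at hA
      exact hA
    have hmemB : redW (FSub f b) ∈ sub S' π' {h'} := by
      have hB : redW (FSub f b) ∈ red {v | ∃ u ∈ sub S π {h'}, v = FSub f u} :=
        ⟨FSub f b, ⟨b, hb, rfl⟩, rfl⟩
      rw [← hsub' h'] at hB
      exact hB
    refine ⟨redW (FSub f a) ++ redW (FSub f b),
      Language.mem_mul.2 ⟨redW (FSub f a), hmemA, redW (FSub f b), hmemB, rfl⟩, ?_⟩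
    show redW (redW (FSub f a) ++ redW (FSub f b)) = redW (FSub f u)
    rw [redW_append_redW, ← FSub_append, ← hu0]
    exact (hF_mk (redW_redW (a ++ b))).symm
end

section
/- Let π : Ã* → G be an m-epi, let A = (Q, q₀, T, E) be a trim Ã-automaton, and let t ∈ T. Let B be the Ã-automaton obtained from A by identifying the state q₀ with t. Then (L(B))π ⊆ ⟨(L(A))π⟩, the subgroup of G generated by (L(A))π. -/
section StallingsAux

open Stallings Stallings.Automaton

variable {α G Q : Type} [Group G]

lemma ev_append_aux (π : FreeMonoid (α × Bool) →* G) (u v : Word α) :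
    ev π (u ++ v) = ev π u * ev π v := by
  show π (FreeMonoid.ofList (u ++ v)) = _
  rw [show FreeMonoid.ofList (u ++ v) = FreeMonoid.ofList u * FreeMonoid.ofList v from rfl,
    map_mul]
  rfl

lemma path_append_aux {β Q : Type} (M : Automaton β Q) {p q r : Q} {u v : List β}
    (h1 : M.Path p u q) (h2 : M.Path q v r) : M.Path p (u ++ v) r := by
  induction h1 with
  | nil => simpa
  | cons he _ ih => exact .cons he (ih h2)

end StallingsAux

open Stallings in
/-- Identifying the initial state of a trim Ã-automaton `M` with a
terminal state `t` yields an automaton `B` with `(L(B))π ⊆ ⟨(L(M))π⟩`. -/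
theorem lang_mergeBasepoint_subset_closure {α G Q : Type} [Finite α] [Group G]
    [DecidableEq Q] (π : FreeMonoid (α × Bool) →* G) (hπ : IsMEpi π)
    (M : Automaton (α × Bool) Q) (hM : M.Trim) (t : Q) (ht : t ∈ M.accept) :
    evImg π (M.merge M.start t).lang ⊆ ↑(Subgroup.closure (evImg π M.lang)) := by
  classical
  set H := Subgroup.closure (evImg π M.lang) with hHdef
  set f : Q → Q := fun x => if x = t then M.start else x with hf
  have hc : ∀ q : Q, ∃ u, M.Path M.start u q := fun q => by
    obtain ⟨u, v, s, hs, h1, h2⟩ := hM q; exact ⟨u, h1⟩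
  choose c hcp using hc
  have memH : ∀ w ∈ M.lang, ev π w ∈ H := fun w hw =>
    Subgroup.subset_closure ⟨w, hw, rfl⟩
  have lemB : ∀ {u u' : Word α} {q : Q}, M.Path M.start u q → M.Path M.start u' q →
      ev π u * (ev π u')⁻¹ ∈ H := by
    intro u u' q h h'
    obtain ⟨_, v, s, hs, _, hv⟩ := hM q
    have h1 : ev π (u ++ v) ∈ H := memH _ ⟨s, hs, path_append_aux M h hv⟩
    have h2 : ev π (u' ++ v) ∈ H := memH _ ⟨s, hs, path_append_aux M h' hv⟩
    have heq : ev π u * (ev π u')⁻¹ = ev π (u ++ v) * (ev π (u' ++ v))⁻¹ := by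
      simp only [ev_append_aux]; group
    rw [heq]; exact mul_mem h1 (inv_mem h2)
  have hct : ev π (c t) ∈ H := memH _ ⟨t, ht, hcp t⟩
  have hcs : ev π (c M.start) ∈ H := by
    have h1 : ev π (c M.start ++ c t) ∈ H :=
      memH _ ⟨t, ht, path_append_aux M (hcp M.start) (hcp t)⟩
    have heq : ev π (c M.start) = ev π (c M.start ++ c t) * (ev π (c t))⁻¹ := by
      simp only [ev_append_aux]; group
    rw [heq]; exact mul_mem h1 (inv_mem hct)
  have haveP : ∀ p : Q, p = t ∨ p = M.start → ev π (c p) ∈ H := by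
    rintro p (rfl | rfl)
    · exact hct
    · exact hcs
  have fcases : ∀ p p' : Q, f p = f p' → p = p' ∨
      ((p = t ∨ p = M.start) ∧ (p' = t ∨ p' = M.start)) := by
    intro p p' h
    by_cases hp : p = t <;> by_cases hp' : p' = t <;>
      simp [hf, hp, hp'] at h ⊢ <;> tauto
  have lemA : ∀ p p' : Q, f p = f p' → ev π (c p) * (ev π (c p'))⁻¹ ∈ H := by
    intro p p' h
    rcases fcases p p' h with rfl | ⟨h1, h2⟩
    · simpa using one_mem H
    · exact mul_mem (haveP p h1) (inv_mem (haveP p' h2))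
  -- main induction on paths of the merged automaton
  have key : ∀ (x : Q) (w : Word α) (y : Q), (M.merge M.start t).Path x w y →
      ∀ p : Q, f p = x → ∃ q : Q, f q = y ∧ ev π (c p ++ w) * (ev π (c q))⁻¹ ∈ H := by
    intro x w y hpath
    induction hpath with
    | nil z =>
      intro p hp
      exact ⟨p, hp, by simpa using one_mem H⟩
    | @cons x x₂ y a w he _ ih =>
      intro p hp
      obtain ⟨e', he', heq⟩ := he
      obtain ⟨p₁, a', q₁⟩ := e'
      have hx : x = f p₁ := congrArg Prod.fst heq
      have ha : a = a' := congrArg (fun z => z.2.1) heq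
      have hx₂ : x₂ = f q₁ := congrArg (fun z => z.2.2) heq
      subst ha
      obtain ⟨q, hq, hIH⟩ := ih q₁ hx₂.symm
      refine ⟨q, hq, ?_⟩
      have hA1 : ev π (c p) * (ev π (c p₁))⁻¹ ∈ H :=
        lemA p p₁ (hp.trans hx)
      have hpath1 : M.Path M.start (c p₁ ++ [a]) q₁ :=
        path_append_aux M (hcp p₁) (.cons he' (.nil q₁))
      have hA2 : ev π (c p₁ ++ [a]) * (ev π (c q₁))⁻¹ ∈ H := lemB hpath1 (hcp q₁)
      have heq2 : ev π (c p ++ a :: w) * (ev π (c q))⁻¹ =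
          (ev π (c p) * (ev π (c p₁))⁻¹) * (ev π (c p₁ ++ [a]) * (ev π (c q₁))⁻¹) *
            (ev π (c q₁ ++ w) * (ev π (c q))⁻¹) := by
        have h3 : c p ++ a :: w = (c p ++ [a]) ++ w := by simp
        rw [h3]
        simp only [ev_append_aux]; group
      rw [heq2]
      exact mul_mem (mul_mem hA1 hA2) hIH
  rintro g ⟨w, hw, rfl⟩
  obtain ⟨s', hs', hpath⟩ := hw
  obtain ⟨s, hs, rfl⟩ := hs'
  have hstart : (M.merge M.start t).start = f M.start := rfl
  obtain ⟨q, hq, hkey⟩ := key (f M.start) w (f s) (by rwa [hstart] at hpath) M.start rfl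
  have hcq : ev π (c q) ∈ H := by
    rcases fcases q s hq with rfl | ⟨h1, _⟩
    · exact memH _ ⟨q, hs, hcp q⟩
    · exact haveP q h1
  have heq3 : ev π w = (ev π (c M.start))⁻¹ *
      (ev π (c M.start ++ w) * (ev π (c q))⁻¹) * ev π (c q) := by
    simp only [ev_append_aux]; group
  rw [heq3]
  exact mul_mem (mul_mem (inv_mem hcs) hkey) hcq
end

section
/- Let S be a Stallings section for an m-epi π : Ã* → G and let H be a finitely generated subgroup of G. Then there exists a finite inverse Ã-automaton A with basepoint such that S_H ⊆ L(A) ⊆ Hπ⁻¹; in particular there exists a regular language L ⊆ Ã* with S_H ⊆ L ⊆ Hπ⁻¹. -/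
namespace StallingsAux
open Stallings Stallings.Automaton

variable {α G β Q : Type} [Group G]

/-! ### Basic `ev` lemmas -/

theorem ev_nil (π : FreeMonoid (α × Bool) →* G) : ev π ([] : Word α) = 1 := by
  simp [ev, FreeMonoid.ofList_nil]

theorem ev_append (π : FreeMonoid (α × Bool) →* G) (u v : Word α) :
    ev π (u ++ v) = ev π u * ev π v := by
  simp [ev, FreeMonoid.ofList_append]

theorem ev_letterInv (π : FreeMonoid (α × Bool) →* G) (hπ : IsMEpi π) (a : α × Bool) :
    ev π [letterInv a] = (ev π [a])⁻¹ := by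
  obtain ⟨x, b⟩ := a
  simpa [ev, FreeMonoid.ofList_singleton, letterInv] using hπ.matched x b

/-! ### Path lemmas -/

theorem path_append {M : Automaton β Q} {p q r : Q} {u v : List β}
    (h : M.Path p u q) (h' : M.Path q v r) : M.Path p (u ++ v) r := by
  induction h with
  | nil => exact h'
  | cons e _ ih => exact Path.cons e (ih h')

theorem path_nil_iff {M : Automaton β Q} {p q : Q} : M.Path p [] q ↔ p = q := by
  constructor
  · intro h; cases h; rfl
  · rintro rfl; exact Path.nil p

theorem path_cons_iff {M : Automaton β Q} {p r : Q} {a : β} {w : List β} :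
    M.Path p (a :: w) r ↔ ∃ q, (p, a, q) ∈ M.edges ∧ M.Path q w r := by
  constructor
  · intro h; cases h with
    | cons e h' => exact ⟨_, e, h'⟩
  · rintro ⟨q, e, h⟩; exact Path.cons e h

theorem path_append_iff {M : Automaton β Q} {p r : Q} {u v : List β} :
    M.Path p (u ++ v) r ↔ ∃ q, M.Path p u q ∧ M.Path q v r := by
  constructor
  · induction u generalizing p with
    | nil => intro h; exact ⟨p, Path.nil p, h⟩
    | cons a u ih =>
      intro h
      rcases path_cons_iff.1 h with ⟨q, e, h'⟩
      rcases ih h' with ⟨m, h1, h2⟩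
      exact ⟨m, Path.cons e h1, h2⟩
  · rintro ⟨q, h1, h2⟩; exact path_append h1 h2

end StallingsAux

namespace StallingsAux
open Stallings Stallings.Automaton

variable {α G β Q : Type} [Group G]

/-! ### Closure of path labels under free reduction, for det+involutive automata -/

theorem path_step {M : Automaton (α × Bool) Q} (hdet : M.Deterministic)
    (hinv : M.Involutive) {p q : Q} {w w' : Word α}
    (hstep : FreeGroup.Red.Step w w') (h : M.Path p w q) : M.Path p w' q := by
  cases hstep with
  | @not L₁ L₂ x b =>
    rcases path_append_iff.1 h with ⟨m, h1, h2⟩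
    rcases path_cons_iff.1 h2 with ⟨r, e1, h3⟩
    rcases path_cons_iff.1 h3 with ⟨m', e2, h4⟩
    have : (r, letterInv (x, b), m) ∈ M.edges := hinv _ _ _ e1
    have hmm : m = m' := hdet r (x, !b) m m' this e2
    exact path_append h1 (hmm ▸ h4)

theorem path_red {M : Automaton (α × Bool) Q} (hdet : M.Deterministic)
    (hinv : M.Involutive) {p q : Q} {w w' : Word α}
    (hred : FreeGroup.Red w w') (h : M.Path p w q) : M.Path p w' q := by
  induction hred with
  | refl => exact h
  | tail _ hstep ih => exact path_step hdet hinv hstep ih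

theorem path_redW {M : Automaton (α × Bool) Q} (hdet : M.Deterministic)
    (hinv : M.Involutive) {p q : Q} {w : Word α}
    (h : M.Path p w q) : M.Path p (redW w) q := by
  letI := Classical.decEq α
  exact path_red hdet hinv (FreeGroup.reduce.red) h

/-! ### The `Spec` invariant: a coset labelling certifying `lang ⊆ Hπ⁻¹` -/

def Spec (π : FreeMonoid (α × Bool) →* G) (H : Subgroup G)
    (M : Automaton (α × Bool) Q) (Φ : Q → G) : Prop :=
  Φ M.start ∈ H ∧ ∀ p a q, (p, a, q) ∈ M.edges → Φ q * (Φ p * ev π [a])⁻¹ ∈ H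

theorem spec_path {π : FreeMonoid (α × Bool) →* G} {H : Subgroup G}
    {M : Automaton (α × Bool) Q} {Φ : Q → G} (hΦ : Spec π H M Φ)
    {p q : Q} {w : Word α} (h : M.Path p w q) :
    Φ q * (Φ p * ev π w)⁻¹ ∈ H := by
  induction h with
  | nil q => simpa [ev_nil] using H.one_mem
  | @cons p q r a w e hp ih =>
    have h1 : Φ q * (Φ p * ev π [a])⁻¹ ∈ H := hΦ.2 p a q e
    have key : Φ r * (Φ p * ev π (a :: w))⁻¹
        = (Φ r * (Φ q * ev π w)⁻¹) * (Φ q * (Φ p * ev π [a])⁻¹) := by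
      have : ev π (a :: w) = ev π [a] * ev π w := by
        simpa using ev_append π [a] w
      rw [this]; group
    rw [key]; exact H.mul_mem ih h1

theorem spec_lang {π : FreeMonoid (α × Bool) →* G} {H : Subgroup G}
    {M : Automaton (α × Bool) Q} {Φ : Q → G} (hΦ : Spec π H M Φ)
    (hacc : M.accept = {M.start}) {w : Word α} (hw : w ∈ M.lang) :
    ev π w ∈ H := by
  rcases hw with ⟨t, ht, hpath⟩
  rw [hacc] at ht
  rcases ht with rfl
  have h1 := spec_path hΦ hpath
  have hs := hΦ.1
  have h2 : Φ M.start * (ev π w)⁻¹ * (Φ M.start)⁻¹ ∈ H := by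
    have : Φ M.start * (Φ M.start * ev π w)⁻¹ = Φ M.start * (ev π w)⁻¹ * (Φ M.start)⁻¹ := by
      group
    exact this ▸ h1
  have h3 : ev π w = (Φ M.start)⁻¹ * (Φ M.start * (ev π w)⁻¹ * (Φ M.start)⁻¹)⁻¹ * Φ M.start := by
    group
  rw [h3]
  exact H.mul_mem (H.mul_mem (H.inv_mem hs) (H.inv_mem h2)) hs

end StallingsAux

namespace StallingsAux
open Stallings Stallings.Automaton

variable {α G β Q : Type} [Group G]

/-! ### The folding quotient -/

inductive FoldRel (M : Automaton β Q) : Q → Q → Prop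
  | refl (q : Q) : FoldRel M q q
  | symm {p q : Q} : FoldRel M p q → FoldRel M q p
  | trans {p q r : Q} : FoldRel M p q → FoldRel M q r → FoldRel M p r
  | fold {p p' q q' : Q} {a : β} : (p, a, q) ∈ M.edges → (p', a, q') ∈ M.edges →
      FoldRel M p p' → FoldRel M q q'

def foldSetoid (M : Automaton β Q) : Setoid Q :=
  ⟨FoldRel M, ⟨fun q => FoldRel.refl q, FoldRel.symm, FoldRel.trans⟩⟩

def foldQuot (M : Automaton β Q) : Automaton β (Quotient (foldSetoid M)) where
  start := Quotient.mk _ M.start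
  accept := {Quotient.mk _ M.start}
  edges := {e | ∃ p a q, (p, a, q) ∈ M.edges ∧
    e = (Quotient.mk (foldSetoid M) p, a, Quotient.mk (foldSetoid M) q)}

theorem foldQuot_det (M : Automaton β Q) : (foldQuot M).Deterministic := by
  rintro X a Y Y' h h'
  obtain ⟨p, b, q, he, h1⟩ := h
  obtain ⟨p', b', q', he', h2⟩ := h'
  simp only [Prod.mk.injEq] at h1 h2
  obtain ⟨h1x, rfl, rfl⟩ := h1
  obtain ⟨h2x, rfl, rfl⟩ := h2
  have hpp : FoldRel M p p' := Quotient.exact (h1x.symm.trans h2x)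
  exact Quotient.sound (FoldRel.fold he he' hpp)

theorem foldQuot_inv {M : Automaton (α × Bool) Q} (hinv : M.Involutive) :
    (foldQuot M).Involutive := by
  rintro X a Y ⟨p, b, q, he, h1⟩
  simp only [Prod.mk.injEq] at h1
  obtain ⟨rfl, rfl, rfl⟩ := h1
  exact ⟨q, letterInv a, p, hinv _ _ _ he, rfl⟩

theorem foldQuot_path {M : Automaton β Q} {p q : Q} {w : List β}
    (h : M.Path p w q) :
    (foldQuot M).Path (Quotient.mk _ p) w (Quotient.mk _ q) := by
  induction h with
  | nil q => exact Path.nil _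
  | @cons p q r a w e _ ih => exact Path.cons ⟨p, a, q, e, rfl⟩ ih

theorem foldRel_phi {M : Automaton (α × Bool) Q} {π : FreeMonoid (α × Bool) →* G}
    {H : Subgroup G} {Φ : Q → G} (hΦ : Spec π H M Φ) {p q : Q}
    (h : FoldRel M p q) : Φ q * (Φ p)⁻¹ ∈ H := by
  induction h with
  | refl q => simpa using H.one_mem
  | @symm p q _ ih =>
    have : Φ p * (Φ q)⁻¹ = (Φ q * (Φ p)⁻¹)⁻¹ := by group
    rw [this]; exact H.inv_mem ih
  | @trans p q r _ _ ih1 ih2 =>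
    have : Φ r * (Φ p)⁻¹ = (Φ r * (Φ q)⁻¹) * (Φ q * (Φ p)⁻¹) := by group
    rw [this]; exact H.mul_mem ih2 ih1
  | @fold p p' q q' a e e' _ ih =>
    have h1 : Φ q * (Φ p * ev π [a])⁻¹ ∈ H := hΦ.2 _ _ _ e
    have h2 : Φ q' * (Φ p' * ev π [a])⁻¹ ∈ H := hΦ.2 _ _ _ e'
    have : Φ q' * (Φ q)⁻¹ = (Φ q' * (Φ p' * ev π [a])⁻¹) * (Φ p' * (Φ p)⁻¹) *
        (Φ q * (Φ p * ev π [a])⁻¹)⁻¹ := by group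
    rw [this]
    exact H.mul_mem (H.mul_mem h2 ih) (H.inv_mem h1)

/-- The labelling descends (modulo `H`) to the folding quotient. -/
theorem foldQuot_spec {M : Automaton (α × Bool) Q} {π : FreeMonoid (α × Bool) →* G}
    {H : Subgroup G} {Φ : Q → G} (hΦ : Spec π H M Φ) :
    Spec π H (foldQuot M) (fun X => Φ X.out) := by
  have key : ∀ p : Q, Φ (Quotient.mk (foldSetoid M) p).out * (Φ p)⁻¹ ∈ H := by
    intro p
    have h : FoldRel M (Quotient.mk (foldSetoid M) p).out p :=
      Quotient.exact (Quotient.out_eq (Quotient.mk (foldSetoid M) p))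
    exact foldRel_phi hΦ (FoldRel.symm h)
  constructor
  · have h1 := key M.start
    show Φ ((foldQuot M).start).out ∈ H
    have e : Φ ((foldQuot M).start).out =
        (Φ (Quotient.mk (foldSetoid M) M.start).out * (Φ M.start)⁻¹) * Φ M.start := by
      show Φ (Quotient.mk (foldSetoid M) M.start).out = _
      group
    rw [e]
    exact H.mul_mem h1 hΦ.1
  · rintro X a Y ⟨p, b, q, he, h1⟩
    simp only [Prod.mk.injEq] at h1
    obtain ⟨rfl, rfl, rfl⟩ := h1
    have h2 := hΦ.2 _ _ _ he
    have hq := key q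
    have hp := key p
    show Φ (Quotient.mk (foldSetoid M) q).out *
        (Φ (Quotient.mk (foldSetoid M) p).out * ev π [a])⁻¹ ∈ H
    have e : Φ (Quotient.mk (foldSetoid M) q).out *
        (Φ (Quotient.mk (foldSetoid M) p).out * ev π [a])⁻¹ =
        (Φ (Quotient.mk (foldSetoid M) q).out * (Φ q)⁻¹) *
        (Φ q * (Φ p * ev π [a])⁻¹) *
        (Φ (Quotient.mk (foldSetoid M) p).out * (Φ p)⁻¹)⁻¹ := by group
    rw [e]
    exact H.mul_mem (H.mul_mem hq h2) (H.inv_mem hp)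

end StallingsAux

namespace StallingsAux
open Stallings Stallings.Automaton

variable {α G β Q : Type} [Group G]

/-! ### Trimming -/

def Good (M : Automaton β Q) (q : Q) : Prop :=
  ∃ u v, M.Path M.start u q ∧ M.Path q v M.start

def trimAut (M : Automaton β Q) : Automaton β {q : Q // Good M q} where
  start := ⟨M.start, [], [], Path.nil _, Path.nil _⟩
  accept := {⟨M.start, [], [], Path.nil _, Path.nil _⟩}
  edges := {e | (e.1.1, e.2.1, e.2.2.1) ∈ M.edges}

theorem trimAut_path_down {M : Automaton β Q} {p q : {q : Q // Good M q}} {w : List β}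
    (h : (trimAut M).Path p w q) : M.Path p.1 w q.1 := by
  induction h with
  | nil q => exact Path.nil _
  | cons e _ ih => exact Path.cons e ih

theorem trimAut_path_up {M : Automaton β Q} {p q : Q} {w : List β}
    (h : M.Path p w q) (hp : Good M p) (hq : Good M q) :
    (trimAut M).Path ⟨p, hp⟩ w ⟨q, hq⟩ := by
  induction h with
  | nil q => exact Path.nil _
  | @cons p r q' a w e hrest ih =>
    have hr : Good M r := by
      obtain ⟨u, _, hu, _⟩ := hp
      obtain ⟨_, v, _, hv⟩ := hq
      exact ⟨u ++ [a], w ++ v,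
        path_append hu (Path.cons e (Path.nil _)), path_append hrest hv⟩
    exact Path.cons
      (show ((⟨p, hp⟩ : {q : Q // Good M q}), a, (⟨r, hr⟩ : {q : Q // Good M q})) ∈
        (trimAut M).edges from e) (ih hr hq)

theorem trimAut_lang {M : Automaton β Q} (hacc : M.accept = {M.start}) :
    ∀ w, (w ∈ (trimAut M).lang ↔ w ∈ M.lang) := by
  intro w
  constructor
  · rintro ⟨t, ht, hpath⟩
    rcases ht with rfl
    exact ⟨M.start, by rw [hacc]; rfl, trimAut_path_down hpath⟩
  · rintro ⟨t, ht, hpath⟩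
    rw [hacc] at ht
    rcases ht with rfl
    exact ⟨_, rfl, trimAut_path_up hpath _ _⟩

theorem trimAut_trim (M : Automaton β Q) : (trimAut M).Trim := by
  rintro ⟨q, u, v, hu, hv⟩
  exact ⟨u, v, _, rfl, trimAut_path_up hu _ _, trimAut_path_up hv _ _⟩

theorem trimAut_det {M : Automaton β Q} (h : M.Deterministic) :
    (trimAut M).Deterministic := by
  rintro p a q q' hq hq'
  exact Subtype.ext (h p.1 a q.1 q'.1 hq hq')

theorem trimAut_inv {M : Automaton (α × Bool) Q} (h : M.Involutive) :
    (trimAut M).Involutive := by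
  rintro p a q he
  exact h p.1 a q.1 he

/-! ### Regularity of the language of a finite automaton -/

def toNFA (M : Automaton β Q) : NFA β Q where
  step := fun p a => {q | (p, a, q) ∈ M.edges}
  start := {M.start}
  accept := M.accept

theorem toNFA_evalFrom {M : Automaton β Q} :
    ∀ (w : List β) (X : Set Q) (s : Q),
      s ∈ (toNFA M).evalFrom X w ↔ ∃ x ∈ X, M.Path x w s := by
  intro w
  induction w with
  | nil =>
    intro X s
    simp only [NFA.evalFrom, List.foldl_nil]
    constructor
    · intro h; exact ⟨s, h, Path.nil _⟩
    · rintro ⟨x, hx, hp⟩; rwa [path_nil_iff.1 hp] at hx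
  | cons a w ih =>
    intro X s
    show s ∈ (toNFA M).evalFrom ((toNFA M).stepSet X a) w ↔ _
    rw [ih]
    constructor
    · rintro ⟨y, hy, hp⟩
      rcases (NFA.mem_stepSet (M := toNFA M)).1 hy with ⟨x, hx, hxy⟩
      exact ⟨x, hx, Path.cons hxy hp⟩
    · rintro ⟨x, hx, hp⟩
      rcases path_cons_iff.1 hp with ⟨y, e, hp'⟩
      exact ⟨y, (NFA.mem_stepSet (M := toNFA M)).2 ⟨x, hx, e⟩, hp'⟩

theorem toNFA_accepts (M : Automaton β Q) : (toNFA M).accepts = M.lang := by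
  ext w
  show (∃ t ∈ (toNFA M).accept, t ∈ (toNFA M).eval w) ↔ _
  constructor
  · rintro ⟨t, ht, hev⟩
    rcases (toNFA_evalFrom w {M.start} t).1 hev with ⟨x, hx, hp⟩
    rcases hx with rfl
    exact ⟨t, ht, hp⟩
  · rintro ⟨t, ht, hp⟩
    exact ⟨t, ht, (toNFA_evalFrom w {M.start} t).2 ⟨M.start, rfl, hp⟩⟩

theorem lang_isRegular (M : Automaton β Q) [Fintype Q] : M.lang.IsRegular := by
  refine ⟨Set Q, Fintype.ofFinite _, (toNFA M).toDFA, ?_⟩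
  rw [NFA.toDFA_correct, toNFA_accepts]

end StallingsAux

namespace StallingsAux
open Stallings Stallings.Automaton

section Flower

variable {α G : Type} [Group G] {ι : Type} {σ : ι → Type}

theorem letterInv_letterInv (a : α × Bool) : letterInv (letterInv a) = a := by
  simp [letterInv]

theorem evalFrom_cons (D : DFA (α × Bool) τ) (s : τ) (b : α × Bool) (u : Word α) :
    D.evalFrom s (b :: u) = D.evalFrom (D.step s b) u := rfl

/-- Useful states of the `i`-th petal: accessible and co-accessible. -/
def Useful (D : ∀ i, DFA (α × Bool) (σ i)) (i : ι) (s : σ i) : Prop :=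
  ∃ u x, (D i).evalFrom (D i).start u = s ∧ (D i).evalFrom s x ∈ (D i).accept

/-- Forward edges of the flower automaton. -/
inductive FlowerEdge (D : ∀ i, DFA (α × Bool) (σ i)) :
    Option (Σ i, σ i) → (α × Bool) → Option (Σ i, σ i) → Prop
  | enter (i : ι) (a : α × Bool) :
      Useful D i ((D i).step (D i).start a) →
      FlowerEdge D none a (some ⟨i, (D i).step (D i).start a⟩)
  | inside (i : ι) (s : σ i) (a : α × Bool) :
      Useful D i s → Useful D i ((D i).step s a) →
      FlowerEdge D (some ⟨i, s⟩) a (some ⟨i, (D i).step s a⟩)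
  | exits (i : ι) (s : σ i) (a : α × Bool) :
      Useful D i s → (D i).step s a ∈ (D i).accept →
      FlowerEdge D (some ⟨i, s⟩) a none
  | short (i : ι) (a : α × Bool) :
      (D i).step (D i).start a ∈ (D i).accept →
      FlowerEdge D none a none

/-- The (symmetrized) flower automaton. -/
def flower (D : ∀ i, DFA (α × Bool) (σ i)) :
    Automaton (α × Bool) (Option (Σ i, σ i)) where
  start := none
  accept := {none}
  edges := {e | FlowerEdge D e.1 e.2.1 e.2.2 ∨ FlowerEdge D e.2.2 (letterInv e.2.1) e.1}

theorem flower_involutive (D : ∀ i, DFA (α × Bool) (σ i)) : (flower D).Involutive := by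
  rintro p a q (h | h)
  · exact Or.inr (by rwa [letterInv_letterInv])
  · exact Or.inl h

variable (π : FreeMonoid (α × Bool) →* G)

/-- The `G`-labelling of petal states. -/
noncomputable def fval (D : ∀ i, DFA (α × Bool) (σ i)) (i : ι) (s : σ i) : G :=
  letI := Classical.propDecidable (∃ u, (D i).evalFrom (D i).start u = s)
  if h : ∃ u, (D i).evalFrom (D i).start u = s then ev π h.choose else 1

theorem fval_eq {D : ∀ i, DFA (α × Bool) (σ i)} {gg : ι → G}
    (hL : ∀ i, ∀ w ∈ (D i).accepts, ev π w = gg i)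
    {i : ι} {s : σ i} (hs : Useful D i s) {u : Word α}
    (hu : (D i).evalFrom (D i).start u = s) : fval π D i s = ev π u := by
  obtain ⟨u₀, x, hu₀, hx⟩ := hs
  have h : ∃ u, (D i).evalFrom (D i).start u = s := ⟨u, hu⟩
  rw [fval, dif_pos h]
  set u₁ := h.choose with hu₁def
  have hu₁ : (D i).evalFrom (D i).start u₁ = s := h.choose_spec
  have acc : ∀ {v : Word α}, (D i).evalFrom (D i).start v = s → v ++ x ∈ (D i).accepts := by
    intro v hv
    show (D i).evalFrom (D i).start (v ++ x) ∈ (D i).accept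
    rw [DFA.evalFrom_of_append, hv]
    exact hx
  have e1 := hL i _ (acc hu₁)
  have e2 := hL i _ (acc hu)
  rw [ev_append] at e1 e2
  exact mul_right_cancel (e1.trans e2.symm)

/-- The labelling of the flower. -/
noncomputable def flowerPhi (D : ∀ i, DFA (α × Bool) (σ i)) :
    Option (Σ i, σ i) → G
  | none => 1
  | some ⟨i, s⟩ => fval π D i s

theorem flower_spec (hπ : IsMEpi π) (H : Subgroup G)
    {D : ∀ i, DFA (α × Bool) (σ i)} {gg : ι → G}
    (hg : ∀ i, gg i ∈ H) (hL : ∀ i, ∀ w ∈ (D i).accepts, ev π w = gg i) :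
    Spec π H (flower D) (flowerPhi π D) := by
  have fwd : ∀ p a q, FlowerEdge D p a q →
      flowerPhi π D q * (flowerPhi π D p * ev π [a])⁻¹ ∈ H := by
    intro p a q h
    cases h with
    | enter i a hU =>
      have : fval π D i ((D i).step (D i).start a) = ev π [a] :=
        fval_eq π hL hU ((D i).evalFrom_singleton _ _)
      show fval π D i _ * (1 * ev π [a])⁻¹ ∈ H
      rw [this]
      simpa using H.one_mem
    | inside i s a hU hU' =>
      obtain ⟨u, x, hu, hx⟩ := hU
      have h1 : fval π D i s = ev π u := fval_eq π hL ⟨u, x, hu, hx⟩ hu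
      have h2 : fval π D i ((D i).step s a) = ev π (u ++ [a]) := by
        refine fval_eq π hL hU' ?_
        rw [DFA.evalFrom_append_singleton, hu]
      show fval π D i _ * (fval π D i s * ev π [a])⁻¹ ∈ H
      rw [h1, h2, ev_append]
      have e : ev π u * ev π [a] * (ev π u * ev π [a])⁻¹ = 1 := by group
      rw [e]
      exact H.one_mem
    | exits i s a hU hacc =>
      obtain ⟨u, x, hu, hx⟩ := hU
      have h1 : fval π D i s = ev π u := fval_eq π hL ⟨u, x, hu, hx⟩ hu
      have hmem : u ++ [a] ∈ (D i).accepts := by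
        show (D i).evalFrom (D i).start (u ++ [a]) ∈ (D i).accept
        rw [DFA.evalFrom_append_singleton, hu]
        exact hacc
      have h2 : ev π u * ev π [a] = gg i := by
        rw [← ev_append]; exact hL i _ hmem
      show (1 : G) * (fval π D i s * ev π [a])⁻¹ ∈ H
      rw [h1, h2, one_mul]
      exact H.inv_mem (hg i)
    | short i a hacc =>
      have hmem : [a] ∈ (D i).accepts := by
        show (D i).evalFrom (D i).start [a] ∈ (D i).accept
        rw [DFA.evalFrom_singleton]
        exact hacc
      show (1 : G) * ((1 : G) * ev π [a])⁻¹ ∈ H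
      rw [hL i _ hmem, one_mul, one_mul]
      exact H.inv_mem (hg i)
  constructor
  · simpa [flowerPhi, flower] using H.one_mem
  · rintro p a q (h | h)
    · exact fwd p a q h
    · have h1 := fwd q (letterInv a) p h
      rw [ev_letterInv π hπ] at h1
      have e : flowerPhi π D q * (flowerPhi π D p * ev π [a])⁻¹ =
          (flowerPhi π D p * (flowerPhi π D q * (ev π [a])⁻¹)⁻¹)⁻¹ := by group
      rw [e]
      exact H.inv_mem h1
end Flower
end StallingsAux

namespace StallingsAux
open Stallings Stallings.Automaton

section Petal

variable {α G : Type} [Group G] {ι : Type} {σ : ι → Type}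

theorem petal_path_inner (D : ∀ i, DFA (α × Bool) (σ i)) (i : ι) :
    ∀ (u : Word α) (s : σ i), u ≠ [] → Useful D i s →
      (D i).evalFrom s u ∈ (D i).accept → (flower D).Path (some ⟨i, s⟩) u none := by
  intro u
  induction u with
  | nil => intro s h; exact absurd rfl h
  | cons b u ih =>
    intro s _ hU hacc
    cases u with
    | nil =>
      have : (D i).step s b ∈ (D i).accept := by
        rwa [(D i).evalFrom_singleton] at hacc
      exact Path.cons (Or.inl (FlowerEdge.exits i s b hU this)) (Path.nil _)
    | cons c u' =>
      obtain ⟨u₀, x, hu₀, hx⟩ := hU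
      have hacc' : (D i).evalFrom ((D i).step s b) (c :: u') ∈ (D i).accept := by
        rwa [evalFrom_cons] at hacc
      have hU' : Useful D i ((D i).step s b) := by
        refine ⟨u₀ ++ [b], c :: u', ?_, hacc'⟩
        rw [DFA.evalFrom_append_singleton, hu₀]
      exact Path.cons
        (Or.inl (FlowerEdge.inside i s b ⟨u₀, x, hu₀, hx⟩ hU'))
        (ih ((D i).step s b) (by simp) hU' hacc')

theorem petal_path (D : ∀ i, DFA (α × Bool) (σ i)) (i : ι) {w : Word α}
    (hw : w ∈ (D i).accepts) : (flower D).Path none w none := by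
  cases w with
  | nil => exact Path.nil _
  | cons a u =>
    have hw' : (D i).evalFrom ((D i).step (D i).start a) u ∈ (D i).accept := by
      have : (D i).evalFrom (D i).start (a :: u) ∈ (D i).accept := hw
      rwa [evalFrom_cons] at this
    cases u with
    | nil =>
      have : (D i).step (D i).start a ∈ (D i).accept := by
        rwa [DFA.evalFrom_nil] at hw'
      exact Path.cons (Or.inl (FlowerEdge.short i a this)) (Path.nil _)
    | cons c u' =>
      have hU : Useful D i ((D i).step (D i).start a) :=
        ⟨[a], c :: u', (D i).evalFrom_singleton _ _, hw'⟩
      exact Path.cons (Or.inl (FlowerEdge.enter i a hU))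
        (petal_path_inner D i (c :: u') _ (by simp) hU hw')

/-- redW of append with reduced second component. -/
theorem redW_append_redW (u c v : Word α) (h : redW c = v) :
    redW (u ++ c) = redW (u ++ v) := by
  letI := Classical.decEq α
  have hred : FreeGroup.Red c v := h ▸ FreeGroup.reduce.red
  exact FreeGroup.reduce.eq_of_red
    (FreeGroup.Red.append_append (FreeGroup.Red.refl) hred)

theorem chain {π : FreeMonoid (α × Bool) →* G} {S : Language (α × Bool)}
    (hS : IsStallingsSection π S) {gg : ι → G} {D : ∀ i, DFA (α × Bool) (σ i)}
    (hacc : ∀ i, (D i).accepts = sub S π {gg i}) :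
    ∀ l : List ι, l ≠ [] → ∀ w ∈ sub S π {(l.map gg).prod},
      ∃ c, redW c = w ∧ (flower D).Path none c none := by
  intro l
  induction l with
  | nil => intro h; exact absurd rfl h
  | cons i l' ih =>
    intro _ w hw
    cases l' with
    | nil =>
      have hwg : w ∈ sub S π {gg i} := by
        refine ⟨hw.1, ?_⟩
        have := hw.2
        simpa using this
      have hwacc : w ∈ (D i).accepts := by rw [hacc i]; exact hwg
      refine ⟨w, hS.reduced w hwg.1, petal_path D i hwacc⟩
    | cons j l'' =>
      have hw2 : w ∈ sub S π {gg i * ((j :: l'').map gg).prod} := by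
        refine ⟨hw.1, ?_⟩
        have := hw.2
        simpa [List.prod_cons] using this
      have := hS.s2 (gg i) (((j :: l'').map gg).prod) w hw2
      obtain ⟨c₀, hc₀, hc₀w⟩ := this
      obtain ⟨u, hu, v, hv, huv⟩ := Language.mem_mul.1 hc₀
      obtain ⟨c', hc', hpath'⟩ := ih (by simp) v hv
      have hupath : (flower D).Path none u none := by
        have : u ∈ (D i).accepts := by rw [hacc i]; exact hu
        exact petal_path D i this
      refine ⟨u ++ c', ?_, path_append hupath hpath'⟩
      rw [redW_append_redW u c' v hc', huv]
      exact hc₀w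
end Petal
end StallingsAux


open Stallings in
/-- Let `S` be a Stallings section for the m-epi `π` and `H` a f.g.
subgroup of `G`. Then there is a finite inverse Ã-automaton `M` with basepoint
such that `S_H ⊆ L(M) ⊆ Hπ⁻¹`; in particular some regular language `L` satisfies
`S_H ⊆ L ⊆ Hπ⁻¹`. -/
theorem exists_inverse_automaton_sandwich {α G : Type} [Finite α] [Group G]
    (π : FreeMonoid (α × Bool) →* G) (hπ : IsMEpi π)
    (S : Language (α × Bool)) (hS : IsStallingsSection π S)
    (H : Subgroup G) (hH : H.FG) :
    (∃ (Q : Type) (_ : Fintype Q) (M : Automaton (α × Bool) Q),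
        M.IsInverse ∧ M.accept = {M.start} ∧
        sub S π ↑H ⊆ M.lang ∧ ∀ w ∈ M.lang, ev π w ∈ H) ∧
    ∃ L : Language (α × Bool), L.IsRegular ∧
        sub S π ↑H ⊆ L ∧ ∀ w ∈ L, ev π w ∈ H := by
  open StallingsAux in
  classical
  obtain ⟨T, hT⟩ := hH
  set Γ : Finset G := (T ∪ T.image (·⁻¹)) ∪ {1} with hΓdef
  have h1Γ : (1 : G) ∈ Γ := by simp [hΓdef]
  have hΓH : ∀ g ∈ Γ, g ∈ H := by
    intro g hg
    simp only [hΓdef, Finset.mem_union, Finset.mem_image, Finset.mem_singleton] at hg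
    rcases hg with (hg | ⟨y, hy, rfl⟩) | rfl
    · exact hT ▸ Subgroup.subset_closure hg
    · exact H.inv_mem (hT ▸ Subgroup.subset_closure hy)
    · exact H.one_mem
  let ι := {x : G // x ∈ Γ}
  let gg : ι → G := fun i => i.1
  have hg : ∀ i : ι, gg i ∈ H := fun i => hΓH i.1 i.2
  have hgen : ∀ h ∈ H, ∃ l : List ι, l ≠ [] ∧ (l.map gg).prod = h := by
    intro h hh
    have h1 : h ∈ Subgroup.closure (↑T : Set G) := hT.symm ▸ hh
    have h2 : h ∈ Submonoid.closure ((↑T : Set G) ∪ (↑T : Set G)⁻¹) := by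
      rw [← Subgroup.closure_toSubmonoid]
      exact h1
    obtain ⟨l, hl, hlp⟩ := Submonoid.exists_list_of_mem_closure h2
    have hlΓ : ∀ y ∈ l, y ∈ Γ := by
      intro y hy
      rcases hl y hy with h | h
      · simp only [hΓdef, Finset.mem_union]
        exact Or.inl (Or.inl h)
      · simp only [hΓdef, Finset.mem_union, Finset.mem_image]
        exact Or.inl (Or.inr ⟨y⁻¹, h, inv_inv y⟩)
    cases l with
    | nil =>
      refine ⟨[⟨1, h1Γ⟩], by simp, ?_⟩
      simp only [List.map_cons, List.map_nil, List.prod_cons, List.prod_nil, mul_one]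
      rw [← hlp]; rfl
    | cons y l' =>
      refine ⟨(y :: l').pmap (fun z hz => (⟨z, hz⟩ : ι)) hlΓ, by simp, ?_⟩
      rw [List.map_pmap]
      show (List.pmap (fun z _ => z) (y :: l') hlΓ).prod = h
      simp only [List.pmap_eq_map, List.map_id']
      · exact hlp
  -- the petal DFAs
  let σ : ι → Type := fun i => (hS.s1 (gg i)).choose
  haveI ftσ : ∀ i, Fintype (σ i) := fun i => (hS.s1 (gg i)).choose_spec.choose
  let D : ∀ i, DFA (α × Bool) (σ i) :=
    fun i => (hS.s1 (gg i)).choose_spec.choose_spec.choose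
  have hD : ∀ i, (D i).accepts = sub S π {gg i} :=
    fun i => (hS.s1 (gg i)).choose_spec.choose_spec.choose_spec
  have hL : ∀ i : ι, ∀ w ∈ (D i).accepts, ev π w = gg i := by
    intro i w hw
    rw [hD i] at hw
    exact hw.2
  -- the flower, its folding quotient and its trim part
  let F := flower D
  have hFinv : F.Involutive := flower_involutive D
  have hFspec : Spec π H F (flowerPhi π D) := flower_spec π hπ H hg hL
  let M1 := foldQuot F
  have hM1inv : M1.Involutive := foldQuot_inv hFinv
  have hM1det : M1.Deterministic := foldQuot_det F
  have hM1spec : Spec π H M1 _ := foldQuot_spec hFspec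
  have hM1acc : M1.accept = {M1.start} := rfl
  have hM1sub : ∀ w ∈ sub S π (↑H : Set G), w ∈ M1.lang := by
    intro w hw
    obtain ⟨l, hlne, hlp⟩ := hgen (ev π w) hw.2
    have hwsub : w ∈ sub S π {(l.map gg).prod} := ⟨hw.1, by rw [hlp]; rfl⟩
    obtain ⟨c, hc, hcpath⟩ := chain hS hD l hlne w hwsub
    have hqpath : M1.Path M1.start c M1.start := foldQuot_path hcpath
    have := path_redW hM1det hM1inv hqpath
    rw [hc] at this
    exact ⟨M1.start, rfl, this⟩
  have hM1H : ∀ w ∈ M1.lang, ev π w ∈ H := fun w hw => spec_lang hM1spec hM1acc hw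
  -- trim
  let M2 := trimAut M1
  haveI : Finite (Option (Σ i : ι, σ i)) := inferInstance
  haveI : Finite (Quotient (foldSetoid F)) := Quotient.finite _
  haveI : Fintype {q // Good M1 q} := Fintype.ofFinite _
  have hM2lang : ∀ w, w ∈ M2.lang ↔ w ∈ M1.lang := trimAut_lang hM1acc
  have hM2acc : M2.accept = {M2.start} := rfl
  have hM2inverse : M2.IsInverse :=
    ⟨trimAut_inv hM1inv, trimAut_det hM1det, trimAut_trim M1, ⟨M2.start, rfl⟩⟩
  refine ⟨⟨{q // Good M1 q}, inferInstance, M2, hM2inverse, hM2acc, ?_, ?_⟩,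
    M2.lang, lang_isRegular M2, ?_, ?_⟩
  · intro w hw; exact (hM2lang w).2 (hM1sub w hw)
  · intro w hw; exact hM1H w ((hM2lang w).1 hw)
  · intro w hw; exact (hM2lang w).2 (hM1sub w hw)
  · intro w hw; exact hM1H w ((hM2lang w).1 hw)
end

section
/- Let S be a Stallings section for an m-epi π : Ã* → G and let L ⊆ Ã* be a regular language. Then S_{Lπ} = (Lπ)π⁻¹ ∩ S is a regular language. -/
namespace SPre

/-! Generic automata machinery: NFA-with-epsilon as a structure `EAut`,
path semantics, epsilon elimination, regularity, DFA products. -/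

structure EAut (β Q : Type) where
  start : Q
  accept : Set Q
  edges : Set (Q × β × Q)
  eps : Q → Q → Prop

namespace EAut

variable {β Q : Type} {M : EAut β Q}

inductive EPath (M : EAut β Q) : Q → List β → Q → Prop
  | nil (q : Q) : EPath M q [] q
  | cons {p q r : Q} {a : β} {w : List β} :
      (p, a, q) ∈ M.edges → EPath M q w r → EPath M p (a :: w) r
  | eps {p q r : Q} {w : List β} : M.eps p q → EPath M q w r → EPath M p w r

def elang (M : EAut β Q) : Language β := {w | ∃ t ∈ M.accept, M.EPath M.start w t}

theorem EPath.append {p q r : Q} {u v : List β}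
    (h1 : EPath M p u q) (h2 : EPath M q v r) : EPath M p (u ++ v) r := by
  induction h1 with
  | nil => exact h2
  | cons e _ ih => exact EPath.cons e (ih h2)
  | eps e _ ih => exact EPath.eps e (ih h2)

theorem EPath.of_star {p q : Q} (h : Relation.ReflTransGen M.eps p q) :
    EPath M p [] q := by
  induction h using Relation.ReflTransGen.head_induction_on with
  | refl => exact EPath.nil q
  | head e _ ih => exact EPath.eps e ih

theorem EPath.star_head {p p' q : Q} {w : List β}
    (h : Relation.ReflTransGen M.eps p p') (h2 : EPath M p' w q) : EPath M p w q := by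
  have := (EPath.of_star h).append h2
  simpa using this

theorem EPath.star_tail {p q q' : Q} {w : List β}
    (h2 : EPath M p w q) (h : Relation.ReflTransGen M.eps q q') : EPath M p w q' := by
  have := h2.append (EPath.of_star h)
  simpa using this

/-- Epsilon elimination: an ordinary NFA (as an edge set) with the same language. -/
def elim (M : EAut β Q) : NFA β Q where
  step := fun p a => {q | ∃ p', Relation.ReflTransGen M.eps p p' ∧ (p', a, q) ∈ M.edges}
  start := {M.start}
  accept := {q | ∃ t, Relation.ReflTransGen M.eps q t ∧ t ∈ M.accept}

/-- Path semantics of the eliminated NFA. -/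
inductive NPath (N : NFA β Q) : Q → List β → Q → Prop
  | nil (q : Q) : NPath N q [] q
  | cons {p q r : Q} {a : β} {w : List β} :
      q ∈ N.step p a → NPath N q w r → NPath N p (a :: w) r

theorem mem_evalFrom_iff (N : NFA β Q) (w : List β) (S : Set Q) (q : Q) :
    q ∈ N.evalFrom S w ↔ ∃ p ∈ S, NPath N p w q := by
  induction w generalizing S with
  | nil =>
    simp only [NFA.evalFrom_nil]
    constructor
    · exact fun h => ⟨q, h, NPath.nil q⟩
    · rintro ⟨p, hp, h⟩; cases h; exact hp
  | cons a w ih =>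
    have : N.evalFrom S (a :: w) = N.evalFrom (N.stepSet S a) w := rfl
    rw [this, ih]
    constructor
    · rintro ⟨p', hp', h⟩
      rw [NFA.mem_stepSet] at hp'
      obtain ⟨p, hp, hstep⟩ := hp'
      exact ⟨p, hp, NPath.cons hstep h⟩
    · rintro ⟨p, hp, h⟩
      cases h with
      | cons hstep h' => exact ⟨_, NFA.mem_stepSet.2 ⟨p, hp, hstep⟩, h'⟩

theorem npath_elim_of_epath {p q : Q} {w : List β} (h : EPath M p w q) :
    ∃ q₀, NPath (elim M) p w q₀ ∧ Relation.ReflTransGen M.eps q₀ q := by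
  induction h with
  | nil q => exact ⟨q, NPath.nil q, Relation.ReflTransGen.refl⟩
  | cons e _ ih =>
    obtain ⟨q₀, hp, hs⟩ := ih
    exact ⟨q₀, NPath.cons ⟨_, Relation.ReflTransGen.refl, e⟩ hp, hs⟩
  | eps e _ ih =>
    obtain ⟨q₀, hp, hs⟩ := ih
    cases hp with
    | nil => exact ⟨_, NPath.nil _, Relation.ReflTransGen.head e hs⟩
    | cons hstep h' =>
      obtain ⟨p'', hs'', he''⟩ := hstep
      exact ⟨q₀, NPath.cons ⟨p'', Relation.ReflTransGen.head e hs'', he''⟩ h', hs⟩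

theorem epath_of_npath_elim {p q : Q} {w : List β} (h : NPath (elim M) p w q) :
    EPath M p w q := by
  induction h with
  | nil q => exact EPath.nil q
  | cons hstep _ ih =>
    obtain ⟨p', hs, he⟩ := hstep
    exact EPath.star_head hs (EPath.cons he ih)

theorem elim_accepts : (elim M).accepts = elang M := by
  ext w
  rw [NFA.mem_accepts]
  constructor
  · rintro ⟨q, ⟨t, hs, ht⟩, hq⟩
    rw [mem_evalFrom_iff] at hq
    obtain ⟨p, hp, hpath⟩ := hq
    rcases hp with rfl
    exact ⟨t, ht, EPath.star_tail (epath_of_npath_elim hpath) hs⟩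
  · rintro ⟨t, ht, hpath⟩
    obtain ⟨q₀, hp, hs⟩ := npath_elim_of_epath hpath
    exact ⟨q₀, ⟨t, hs, ht⟩, (mem_evalFrom_iff _ _ _ _).2 ⟨M.start, rfl, hp⟩⟩

theorem elang_isRegular [Finite Q] (M : EAut β Q) : (elang M).IsRegular := by
  haveI : Fintype Q := Fintype.ofFinite Q
  exact ⟨Set Q, inferInstance, (elim M).toDFA, by rw [NFA.toDFA_correct, elim_accepts]⟩

end EAut

/-! DFA product constructions -/

section Prod

variable {β : Type} {L₁ L₂ : Language β}

private def prodDFA {σ₁ σ₂ : Type} (M₁ : DFA β σ₁) (M₂ : DFA β σ₂) (acc : Set (σ₁ × σ₂)) :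
    DFA β (σ₁ × σ₂) where
  step := fun p a => (M₁.step p.1 a, M₂.step p.2 a)
  start := (M₁.start, M₂.start)
  accept := acc

private theorem prodDFA_evalFrom {σ₁ σ₂ : Type} (M₁ : DFA β σ₁) (M₂ : DFA β σ₂)
    (acc : Set (σ₁ × σ₂)) (p : σ₁ × σ₂) (w : List β) :
    (prodDFA M₁ M₂ acc).evalFrom p w = (M₁.evalFrom p.1 w, M₂.evalFrom p.2 w) := by
  induction w generalizing p with
  | nil => rfl
  | cons a w ih => exact ih _

theorem isRegular_inter (h₁ : L₁.IsRegular) (h₂ : L₂.IsRegular) :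
    Language.IsRegular {w | w ∈ L₁ ∧ w ∈ L₂} := by
  obtain ⟨σ₁, F₁, M₁, rfl⟩ := h₁
  obtain ⟨σ₂, F₂, M₂, rfl⟩ := h₂
  refine ⟨σ₁ × σ₂, inferInstance, prodDFA M₁ M₂ {p | p.1 ∈ M₁.accept ∧ p.2 ∈ M₂.accept}, ?_⟩
  ext w
  rw [DFA.mem_accepts]
  show _ ∈ _ ↔ _ ∈ M₁.accepts ∧ _ ∈ M₂.accepts
  rw [DFA.mem_accepts, DFA.mem_accepts]
  show (prodDFA M₁ M₂ _).evalFrom _ w ∈ _ ↔ _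
  rw [prodDFA_evalFrom]
  rfl

theorem isRegular_union (h₁ : L₁.IsRegular) (h₂ : L₂.IsRegular) :
    Language.IsRegular {w | w ∈ L₁ ∨ w ∈ L₂} := by
  obtain ⟨σ₁, F₁, M₁, rfl⟩ := h₁
  obtain ⟨σ₂, F₂, M₂, rfl⟩ := h₂
  refine ⟨σ₁ × σ₂, inferInstance, prodDFA M₁ M₂ {p | p.1 ∈ M₁.accept ∨ p.2 ∈ M₂.accept}, ?_⟩
  ext w
  rw [DFA.mem_accepts]
  show _ ∈ _ ↔ _ ∈ M₁.accepts ∨ _ ∈ M₂.accepts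
  rw [DFA.mem_accepts, DFA.mem_accepts]
  show (prodDFA M₁ M₂ _).evalFrom _ w ∈ _ ↔ _
  rw [prodDFA_evalFrom]
  rfl

theorem isRegular_nonnil : Language.IsRegular {w : List β | w ≠ []} := by
  refine ⟨Bool, inferInstance, ⟨fun _ _ => true, false, {true}⟩, ?_⟩
  ext w
  rw [DFA.mem_accepts]
  cases w with
  | nil => exact iff_of_false (by simp [DFA.eval]) (fun h => h rfl)
  | cons a w =>
    have : ∀ (v : List β), DFA.evalFrom ⟨fun _ _ => true, false, {true}⟩ true v = true := by
      intro v; induction v with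
      | nil => rfl
      | cons b v ih => exact ih
    simp only [DFA.eval]
    show DFA.evalFrom _ (DFA.step _ false a) w ∈ _ ↔ _
    rw [show DFA.step (⟨fun _ _ => true, false, {true}⟩ : DFA β Bool) false a = true from rfl,
      this]
    exact iff_of_true rfl (List.cons_ne_nil a w)

end Prod

end SPre

namespace SPre
open Stallings

variable {α : Type} {G : Type} [Group G]

/-! ### Reduction lemmas -/

theorem redW_def (w : Word α) : redW w = @FreeGroup.reduce α (Classical.decEq α) w := rfl

theorem red_redW (w : Word α) : FreeGroup.Red w (redW w) := by
  letI := Classical.decEq α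
  exact FreeGroup.reduce.red

theorem redW_eq_of_red {u v : Word α} (h : FreeGroup.Red u v) : redW u = redW v := by
  letI := Classical.decEq α
  exact FreeGroup.reduce.eq_of_red h

theorem redW_idem (w : Word α) : redW (redW w) = redW w := by
  letI := Classical.decEq α
  exact FreeGroup.reduce.idem

theorem redW_nil : redW ([] : Word α) = [] := rfl

theorem redW_append_left {y : Word α} (hy : redW y = []) (x : Word α) :
    redW (y ++ x) = redW x := by
  have h1 : FreeGroup.Red y [] := hy ▸ red_redW y
  have : FreeGroup.Red (y ++ x) ([] ++ x) := FreeGroup.Red.append_append h1 FreeGroup.Red.refl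
  simpa using redW_eq_of_red this

theorem red_of_redW_eq {x z : Word α} (h : redW x = z) : FreeGroup.Red x z :=
  h ▸ red_redW x

theorem redW_cons_congr {x y : Word α} (a : α × Bool) (h : redW x = redW y) :
    redW (a :: x) = redW (a :: y) := by
  letI := Classical.decEq α
  rw [redW_def, redW_def, FreeGroup.reduce.cons, FreeGroup.reduce.cons,
    ← redW_def, ← redW_def, h]

/-- The key decomposition lemma: if `redW x = a :: w` then `x` factors as
`x₁ ++ a :: x₂` with `redW x₁ = []` and `redW x₂ = w`. -/
theorem redW_decomp : ∀ (n : ℕ) (x : Word α), x.length ≤ n → ∀ {a : α × Bool} {w : Word α},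
    redW x = a :: w → ∃ x₁ x₂, x = x₁ ++ a :: x₂ ∧ redW x₁ = [] ∧ redW x₂ = w := by
  letI := Classical.decEq α
  intro n
  induction n with
  | zero =>
    intro x hx a w h
    have : x = [] := List.eq_nil_of_length_eq_zero (Nat.le_zero.mp hx)
    rw [this, redW_nil] at h
    exact absurd h (by simp)
  | succ n ih =>
    intro x hx a w h
    cases x with
    | nil => rw [redW_nil] at h; exact absurd h (by simp)
    | cons c x' =>
      have hx' : x'.length ≤ n := Nat.le_of_succ_le_succ (by simpa using hx)
      rw [redW_def, FreeGroup.reduce.cons] at h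
      cases hr : @FreeGroup.reduce α (Classical.decEq α) x' with
      | nil =>
        rw [hr] at h
        simp only [List.cons.injEq] at h
        obtain ⟨rfl, rfl⟩ := h
        exact ⟨[], x', rfl, rfl, hr⟩
      | cons b t =>
        rw [hr] at h
        by_cases hc : c.1 = b.1 ∧ c.2 = !b.2
        · rw [show (List.casesOn (b :: t) [c] fun hd tl =>
              if c.1 = hd.1 ∧ c.2 = !hd.2 then tl else c :: hd :: tl) =
              if c.1 = b.1 ∧ c.2 = !b.2 then t else c :: b :: t from rfl, if_pos hc] at h
          have hr' : redW x' = b :: a :: w := by rw [redW_def, hr, h]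
          obtain ⟨y₁, y₂, hx'eq, hy₁, hy₂⟩ := ih x' hx' hr'
          have hy₂len : y₂.length ≤ n := by
            have := hx'; rw [hx'eq] at this; simp at this; omega
          obtain ⟨z₁, z₂, hy₂eq, hz₁, hz₂⟩ := ih y₂ hy₂len hy₂
          refine ⟨c :: y₁ ++ b :: z₁, z₂, ?_, ?_, hz₂⟩
          · rw [hx'eq, hy₂eq]; simp
          · have h1 : FreeGroup.Red (c :: (y₁ ++ b :: z₁)) (c :: b :: z₁) := by
              have hred : FreeGroup.Red (y₁ ++ b :: z₁) ([] ++ b :: z₁) :=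
                FreeGroup.Red.append_append (red_of_redW_eq hy₁) FreeGroup.Red.refl
              simpa using FreeGroup.Red.append_append
                (FreeGroup.Red.refl : FreeGroup.Red [c] [c]) hred
            have hceq : c = (b.1, !b.2) := Prod.ext hc.1 hc.2
            have h2 : FreeGroup.Red.Step (c :: b :: z₁) z₁ := by
              rw [hceq]
              have := @FreeGroup.Red.Step.not α [] z₁ b.1 (!b.2)
              simpa [Bool.not_not] using this
            have : FreeGroup.Red (c :: y₁ ++ b :: z₁) z₁ := by
              simpa using h1.trans (Relation.ReflTransGen.single h2)
            rw [redW_eq_of_red this, hz₁]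
        · rw [show (List.casesOn (b :: t) [c] fun hd tl =>
              if c.1 = hd.1 ∧ c.2 = !hd.2 then tl else c :: hd :: tl) =
              if c.1 = b.1 ∧ c.2 = !b.2 then t else c :: b :: t from rfl, if_neg hc] at h
          simp only [List.cons.injEq] at h
          obtain ⟨rfl, rfl⟩ := h
          exact ⟨[], x', rfl, rfl, by rw [redW_def, hr]⟩


/-! ### Evaluation lemmas -/

theorem ev_append (π : FreeMonoid (α × Bool) →* G) (u v : Word α) :
    ev π (u ++ v) = ev π u * ev π v := by
  unfold ev
  rw [← map_mul]
  rfl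

theorem ev_nil (π : FreeMonoid (α × Bool) →* G) : ev π [] = 1 := map_one π

theorem ev_cons (π : FreeMonoid (α × Bool) →* G) (a : α × Bool) (w : Word α) :
    ev π (a :: w) = π (FreeMonoid.of a) * ev π w := by
  have : (a :: w : Word α) = [a] ++ w := rfl
  rw [this, ev_append]; rfl

theorem ev_step {π : FreeMonoid (α × Bool) →* G} (hπ : IsMEpi π) {x y : Word α}
    (h : FreeGroup.Red.Step x y) : ev π x = ev π y := by
  cases h with
  | @not L₁ L₂ r b =>
    simp [ev_append, ev_cons, hπ.matched r b, mul_assoc]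

theorem ev_of_red {π : FreeMonoid (α × Bool) →* G} (hπ : IsMEpi π) {x y : Word α}
    (h : FreeGroup.Red x y) : ev π x = ev π y := by
  induction h with
  | refl => rfl
  | tail _ hstep ih => exact ih.trans (ev_step hπ hstep)

theorem ev_redW {π : FreeMonoid (α × Bool) →* G} (hπ : IsMEpi π) (w : Word α) :
    ev π (redW w) = ev π w :=
  (ev_of_red hπ (red_redW w)).symm

/-! ### The Benois saturation construction -/

theorem benois {X : Language (α × Bool)} (hX : X.IsRegular) :
    ∃ Y : Language (α × Bool), Y.IsRegular ∧
      ∀ w : Word α, redW w = w → (w ∈ Y ↔ ∃ x ∈ X, redW x = w) := by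
  obtain ⟨σ, F, M, rfl⟩ := hX
  let E : EAut (α × Bool) σ :=
    { start := M.start, accept := M.accept,
      edges := {e | e.2.2 = M.step e.1 e.2.1},
      eps := fun p q => ∃ y, M.evalFrom p y = q ∧ redW y = [] }
  have B1 : ∀ (n : ℕ) (x : Word α), x.length ≤ n → ∀ p : σ,
      EAut.EPath E p (redW x) (M.evalFrom p x) := by
    intro n
    induction n with
    | zero =>
      intro x hx p
      have hx0 : x = [] := List.eq_nil_of_length_eq_zero (Nat.le_zero.mp hx)
      subst hx0
      exact EAut.EPath.nil _
    | succ n ih =>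
      intro x hx p
      cases hr : redW x with
      | nil =>
        exact EAut.EPath.eps ⟨x, rfl, hr⟩ (EAut.EPath.nil _)
      | cons a w =>
        obtain ⟨x₁, x₂, hxeq, h₁, h₂⟩ := redW_decomp (n+1) x hx hr
        have hlen : x₂.length ≤ n := by rw [hxeq] at hx; simp at hx; omega
        have key : EAut.EPath E p (a :: w)
            (M.evalFrom (M.step (M.evalFrom p x₁) a) x₂) :=
          EAut.EPath.eps ⟨x₁, rfl, h₁⟩
            (EAut.EPath.cons (q := M.step (M.evalFrom p x₁) a) rfl (h₂ ▸ ih x₂ hlen _))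
        rw [hxeq, DFA.evalFrom_of_append]
        exact key
  have B2 : ∀ {p q : σ} {w : Word α}, EAut.EPath E p w q →
      ∃ y, M.evalFrom p y = q ∧ redW y = redW w := by
    intro p q w h
    induction h with
    | nil => exact ⟨[], rfl, rfl⟩
    | @cons p' q' r' a w' e _ ih =>
      obtain ⟨y, hy, hyr⟩ := ih
      refine ⟨a :: y, ?_, redW_cons_congr a hyr⟩
      have : M.evalFrom p' (a :: y) = M.evalFrom (M.step p' a) y := rfl
      rw [this, ← show q' = M.step p' a from e, hy]
    | eps he _ ih =>
      obtain ⟨y₀, h0, h0r⟩ := he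
      obtain ⟨y, hy, hyr⟩ := ih
      exact ⟨y₀ ++ y, by rw [DFA.evalFrom_of_append, h0, hy],
        by rw [redW_append_left h0r, hyr]⟩
  haveI : Finite σ := ⟨F.equivFin⟩
  refine ⟨EAut.elang E, EAut.elang_isRegular E, ?_⟩
  intro w hw
  constructor
  · rintro ⟨t, ht, hpath⟩
    obtain ⟨y, hy, hyr⟩ := B2 hpath
    refine ⟨y, ?_, by rw [hyr, hw]⟩
    rw [DFA.mem_accepts]
    show M.evalFrom M.start y ∈ M.accept
    rw [show M.evalFrom M.start y = t from hy]
    exact ht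
  · rintro ⟨x, hx, hxr⟩
    refine ⟨M.evalFrom M.start x, (DFA.mem_accepts M).mp hx, ?_⟩
    have := B1 x.length x le_rfl M.start
    rw [hxr] at this
    exact this

/-! ### Substitution of languages -/

def substW {β γ : Type} (K : β → Language γ) (u : List β) : Language γ := (u.map K).prod

def substL {β γ : Type} (K : β → Language γ) (L : Language β) : Language γ :=
  {x | ∃ u ∈ L, x ∈ substW K u}

theorem substW_nil {β γ : Type} (K : β → Language γ) : substW K [] = 1 := rfl

theorem mem_substW_cons {β γ : Type} (K : β → Language γ) (b : β) (u : List β) (x : List γ) :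
    x ∈ substW K (b :: u) ↔ ∃ y ∈ K b, ∃ z ∈ substW K u, y ++ z = x := by
  unfold substW
  rw [List.map_cons, List.prod_cons]
  exact Language.mem_mul

theorem substW_append {β γ : Type} (K : β → Language γ) (u v : List β) :
    substW K (u ++ v) = substW K u * substW K v := by
  unfold substW
  rw [List.map_append, List.prod_append]

theorem substL_isRegular {β γ : Type} [Finite β] {K : β → Language γ}
    (hK : ∀ b, (K b).IsRegular) {L : Language β} (hL : L.IsRegular) :
    (substL K L).IsRegular := by
  obtain ⟨σQ, FQ, M, rfl⟩ := hL
  choose σ F D hD using hK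
  haveI : ∀ b, Fintype (σ b) := F
  haveI : Fintype β := Fintype.ofFinite β
  let E : EAut γ (σQ × Option (Σ b : β, σ b)) :=
    { start := (M.start, none)
      accept := {c | c.2 = none ∧ c.1 ∈ M.accept}
      edges := {e | ∃ q b s a, e = ((q, some ⟨b, s⟩), a, (q, some ⟨b, (D b).step s a⟩))}
      eps := fun c c' =>
        (∃ q b, c = (q, none) ∧ c' = (q, some ⟨b, (D b).start⟩)) ∨
        (∃ q b s, s ∈ (D b).accept ∧ c = (q, some ⟨b, s⟩) ∧ c' = (M.step q b, none)) }
  have gad : ∀ (y : List γ) (q : σQ) (b : β) (s : σ b),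
      EAut.EPath E (q, some ⟨b, s⟩) y (q, some ⟨b, (D b).evalFrom s y⟩) := by
    intro y
    induction y with
    | nil => intro q b s; exact EAut.EPath.nil _
    | cons a y ih =>
      intro q b s
      exact EAut.EPath.cons ⟨q, b, s, a, rfl⟩ (ih q b ((D b).step s a))
  have fwd : ∀ (u : List β) (q : σQ) (x : List γ), x ∈ substW K u →
      EAut.EPath E (q, none) x (M.evalFrom q u, none) := by
    intro u
    induction u with
    | nil =>
      intro q x hx
      rw [substW_nil, Language.mem_one] at hx
      subst hx
      exact EAut.EPath.nil _
    | cons b u ih =>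
      intro q x hx
      rw [mem_substW_cons] at hx
      obtain ⟨y, hy, z, hz, rfl⟩ := hx
      have hyacc : (D b).evalFrom (D b).start y ∈ (D b).accept := by
        rw [← hD b] at hy
        exact (DFA.mem_accepts _).mp hy
      refine EAut.EPath.eps (Or.inl ⟨q, b, rfl, rfl⟩) ?_
      exact (gad y q b (D b).start).append
        (EAut.EPath.eps (Or.inr ⟨q, b, _, hyacc, rfl, rfl⟩) (ih (M.step q b) z hz))
  have bwd : ∀ {c : σQ × Option (Σ b : β, σ b)} {x : List γ} {d}, EAut.EPath E c x d →
      ∀ t : σQ, d = (t, none) →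
      (∀ q, c = (q, none) → ∃ u, M.evalFrom q u = t ∧ x ∈ substW K u) ∧
      (∀ (q : σQ) (b : β) (s : σ b), c = (q, some ⟨b, s⟩) →
        ∃ y u, (D b).evalFrom s y ∈ (D b).accept ∧ M.evalFrom (M.step q b) u = t ∧
          ∃ z ∈ substW K u, x = y ++ z) := by
    intro c x d h
    induction h with
    | nil p =>
      intro t hd
      constructor
      · rintro q rfl
        injection hd with hq _
        subst hq
        exact ⟨[], rfl, Language.nil_mem_one⟩
      · rintro q b s rfl
        injection hd with _ hcontra
        simp at hcontra
    | @cons c c' d' a x' e _ ih =>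
      intro t hd
      obtain ⟨q, b, s, a', he⟩ := e
      injection he with hc he2
      injection he2 with ha hc'
      subst ha
      constructor
      · rintro q' rfl
        simp at hc
      · rintro q' b' s' hcc
        rw [hcc] at hc
        injection hc with hq hsome
        subst hq
        injection hsome with hsig
        obtain ⟨rfl, hs⟩ := Sigma.mk.inj_iff.mp hsig
        have hs' := eq_of_heq hs
        subst hs'
        obtain ⟨y', u, hyacc, hu, z, hz, hx⟩ := (ih t hd).2 _ _ _ hc'
        exact ⟨a :: y', u, hyacc, hu, z, hz, by rw [hx]; rfl⟩
    | @eps c c' d' x' he _ ih =>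
      intro t hd
      rcases he with ⟨q, b, hc, hc'⟩ | ⟨q, b, s, hacc, hc, hc'⟩
      · constructor
        · rintro q' hcc
          rw [hcc] at hc
          injection hc with hq _
          subst hq
          obtain ⟨y, u, hyacc, hu, z, hz, hx⟩ := (ih t hd).2 q' b (D b).start hc'
          refine ⟨b :: u, hu, ?_⟩
          rw [mem_substW_cons]
          refine ⟨y, ?_, z, hz, hx.symm⟩
          rw [← hD b]
          exact (DFA.mem_accepts _).mpr hyacc
        · rintro q' b' s' hcc
          rw [hcc] at hc
          injection hc with _ hcontra
          simp at hcontra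
      · constructor
        · rintro q' hcc
          rw [hcc] at hc
          injection hc with _ hcontra
          simp at hcontra
        · rintro q' b' s' hcc
          rw [hcc] at hc
          injection hc with hq hsome
          subst hq
          injection hsome with hsig
          obtain ⟨rfl, hs⟩ := Sigma.mk.inj_iff.mp hsig
          have hs' := eq_of_heq hs
          subst hs'
          obtain ⟨u, hu, hx⟩ := (ih t hd).1 (M.step q' b') hc'
          exact ⟨[], u, hacc, hu, x', hx, rfl⟩
  have hlang : EAut.elang E = substL K M.accepts := by
    ext x
    constructor
    · rintro ⟨⟨t, o⟩, ⟨ho, hacc⟩, hpath⟩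
      simp only at ho
      subst ho
      obtain ⟨u, hu, hx⟩ := (bwd hpath t rfl).1 M.start rfl
      refine ⟨u, ?_, hx⟩
      rw [DFA.mem_accepts]
      show M.evalFrom M.start u ∈ M.accept
      rw [hu]
      exact hacc
    · rintro ⟨u, hu, hx⟩
      exact ⟨(M.evalFrom M.start u, none), ⟨rfl, (DFA.mem_accepts M).mp hu⟩,
        fwd u M.start x hx⟩
  exact hlang ▸ EAut.elang_isRegular E

/-! ### Main lemmas about Stallings sections -/

theorem mem_sub {S : Language (α × Bool)} {π : FreeMonoid (α × Bool) →* G} {X : Set G}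
    {w : Word α} : w ∈ sub S π X ↔ w ∈ S ∧ ev π w ∈ X := Iff.rfl

theorem ev_substW {S : Language (α × Bool)} {π : FreeMonoid (α × Bool) →* G} :
    ∀ (u : Word α) {x : Word α}, x ∈ substW (fun b => sub S π {ev π [b]}) u →
      ev π x = ev π u := by
  intro u
  induction u with
  | nil =>
    intro x hx
    rw [substW_nil, Language.mem_one] at hx
    subst hx
    rfl
  | cons b u ih =>
    intro x hx
    rw [mem_substW_cons] at hx
    obtain ⟨y, hy, z, hz, rfl⟩ := hx
    have h1 : ev π y = ev π [b] := Set.eq_of_mem_singleton hy.2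
    have h2 := ih hz
    rw [ev_append, h1, h2, ← ev_append]
    rfl

theorem main_sub {S : Language (α × Bool)} {π : FreeMonoid (α × Bool) →* G}
    (hπ : IsMEpi π) (hS : IsStallingsSection π S) :
    ∀ (u : Word α) (a : α × Bool) (w : Word α),
      w ∈ sub S π {ev π (u ++ [a])} →
      ∃ x ∈ substW (fun b => sub S π {ev π [b]}) (u ++ [a]), redW x = w := by
  intro u
  induction u using List.reverseRecOn with
  | nil =>
    intro a w hw
    refine ⟨w, ?_, hS.reduced w hw.1⟩
    rw [show (([] : Word α) ++ [a]) = a :: [] from rfl, mem_substW_cons]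
    exact ⟨w, hw, [], Language.nil_mem_one, List.append_nil w⟩
  | append_singleton u b ih =>
    intro a w hw
    have hw' : w ∈ sub S π {ev π (u ++ [b]) * ev π [a]} :=
      ⟨hw.1, by rw [← ev_append]; exact hw.2⟩
    have hred := hS.s2 (ev π (u ++ [b])) (ev π [a]) w hw'
    obtain ⟨x0, hx0, hredx0⟩ := hred
    obtain ⟨z, hz, y, hy, rfl⟩ := Language.mem_mul.mp hx0
    obtain ⟨x', hx', hx'red⟩ := ih b z hz
    refine ⟨x' ++ y, ?_, ?_⟩
    · rw [substW_append]
      refine Language.append_mem_mul hx' ?_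
      rw [show ([a] : Word α) = a :: [] from rfl, mem_substW_cons]
      exact ⟨y, hy, [], Language.nil_mem_one, List.append_nil y⟩
    · have hredxy : FreeGroup.Red (x' ++ y) (z ++ y) :=
        FreeGroup.Red.append_append (red_of_redW_eq hx'red) FreeGroup.Red.refl
      rw [redW_eq_of_red hredxy]
      exact hredx0


end SPre

open Stallings in
/-- (Generalized Benois theorem.) Let `S` be a Stallings section for
the m-epi `π` and let `L ⊆ Ã*` be regular. Then `S_{Lπ} = (Lπ)π⁻¹ ∩ S` is a
regular language. -/
theorem sub_image_isRegular {α G : Type} [Finite α] [Group G]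
    (π : FreeMonoid (α × Bool) →* G) (hπ : IsMEpi π)
    (S : Language (α × Bool)) (hS : IsStallingsSection π S)
    (L : Language (α × Bool)) (hL : L.IsRegular) :
    (sub S π (evImg π L)).IsRegular := by
  classical
  set K : (α × Bool) → Language (α × Bool) := fun b => sub S π {ev π [b]} with hKdef
  have hKreg : ∀ b, (K b).IsRegular := fun b => hS.s1 (ev π [b])
  have hLplus : Language.IsRegular {u | u ∈ L ∧ u ≠ []} :=
    SPre.isRegular_inter hL SPre.isRegular_nonnil
  have hX : (SPre.substL K {u | u ∈ L ∧ u ≠ []}).IsRegular :=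
    SPre.substL_isRegular hKreg hLplus
  obtain ⟨Y, hYreg, hY⟩ := SPre.benois hX
  have hT : Language.IsRegular {w | w ∈ S ∧ w ∈ Y} := SPre.isRegular_inter hS.regular hYreg
  -- fact1 : T ⊆ target
  have fact1 : ∀ w : Word α, w ∈ S → w ∈ Y → w ∈ sub S π (evImg π L) := by
    intro w hwS hwY
    have hwred : redW w = w := hS.reduced w hwS
    obtain ⟨x, hxX, hxred⟩ := (hY w hwred).mp hwY
    obtain ⟨u, ⟨huL, -⟩, hxu⟩ := hxX
    refine ⟨hwS, u, huL, ?_⟩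
    rw [← SPre.ev_substW u hxu, ← hxred]
    exact (SPre.ev_redW hπ x).symm
  -- fact3 : target ⊆ T ∪ (S_1 with [] ∈ L)
  have fact3 : ∀ w : Word α, w ∈ sub S π (evImg π L) →
      (w ∈ S ∧ w ∈ Y) ∨ (w ∈ sub S π {(1 : G)} ∧ ([] : Word α) ∈ L) := by
    intro w hw
    obtain ⟨hwS, u, huL, hevu⟩ := hw
    rcases List.eq_nil_or_concat u with rfl | ⟨u', a, rfl⟩
    · right
      exact ⟨⟨hwS, show ev π w ∈ {(1:G)} from by
        rw [← hevu, SPre.ev_nil]; rfl⟩, huL⟩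
    · left
      rw [List.concat_eq_append] at huL hevu
      obtain ⟨x, hx, hxred⟩ := SPre.main_sub hπ hS u' a w
        ⟨hwS, show ev π w ∈ {ev π (u' ++ [a])} from Set.mem_singleton_iff.mpr hevu.symm⟩
      refine ⟨hwS, ?_⟩
      rw [hY w (hS.reduced w hwS)]
      exact ⟨x, ⟨u' ++ [a], ⟨huL, by simp⟩, hx⟩, hxred⟩
  by_cases hε : ([] : Word α) ∈ L
  · have heq : sub S π (evImg π L) =
        {w | w ∈ {w | w ∈ S ∧ w ∈ Y} ∨ w ∈ sub S π {(1 : G)}} := by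
      ext w
      constructor
      · intro hw
        rcases fact3 w hw with h | ⟨h, -⟩
        · exact Or.inl h
        · exact Or.inr h
      · rintro (⟨hwS, hwY⟩ | ⟨hwS, hev⟩)
        · exact fact1 w hwS hwY
        · exact ⟨hwS, [], hε, by rw [SPre.ev_nil, ← Set.eq_of_mem_singleton hev]⟩
    rw [heq]
    exact SPre.isRegular_union hT (hS.s1 1)
  · have heq : sub S π (evImg π L) = {w | w ∈ S ∧ w ∈ Y} := by
      ext w
      constructor
      · intro hw
        rcases fact3 w hw with h | ⟨-, h⟩
        · exact h
        · exact absurd h hε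
      · rintro ⟨hwS, hwY⟩
        exact fact1 w hwS hwY
    rw [heq]
    exact hT
end
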